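/- arXiv:1403.1149 — 4 statements merged into one kernel-verified Lean document; each statement's English description precedes it below -/
import Mathlib

section
/- With the notation of the previous statement, suppose additionally that M = ⟨G_i, a_i G_i a_i⁻¹⟩. Then the homomorphism φ_i : L_i → L_{i+1} is surjective. -/
/-- Surjectivity of `φᵢ : Lᵢ →* Lᵢ₊₁`, assuming `M = ⟨Gᵢ, aᵢ Gᵢ aᵢ⁻¹⟩`.

Setup as before: `Lᵢ = M ∗_{Gᵢ₋₁} Mᵢ` with inclusions `j, j'`, and
`Lᵢ₊₁ = M ∗_{Gᵢ} Mᵢ₊₁` with inclusions `k, k'` (whose ranges generate `Lᵢ₊₁`),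
and `φ` is the homomorphism determined by `φ(g) = g` on `M` and
`φ(h) = βᵢ₊₁(aᵢ) βᵢ⁻¹(h) βᵢ₊₁(aᵢ)⁻¹` on `Mᵢ`. -/
theorem stmt2 {M Mi Mi1 Li Li1 : Type} [Group M] [Group Mi] [Group Mi1]
    [Group Li] [Group Li1]
    (Gi1 Gi : Subgroup M) (hGG : Gi1 ≤ Gi)
    (a : M) (hcent : ∀ g ∈ Gi1, a * g = g * a)
    (hgenM : Subgroup.closure ((Gi : Set M) ∪ (fun g => a * g * a⁻¹) '' Gi) = ⊤)
    (βi : M ≃* Mi) (βi1 : M ≃* Mi1)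
    (j : M →* Li) (j' : Mi →* Li)
    (hagr : ∀ g ∈ Gi1, j g = j' (βi g))
    (k : M →* Li1) (k' : Mi1 →* Li1)
    (hagr' : ∀ g ∈ Gi, k g = k' (βi1 g))
    (hgenL : Subgroup.closure (Set.range k ∪ Set.range k') = ⊤)
    (φ : Li →* Li1)
    (hφM : ∀ g : M, φ (j g) = k g)
    (hφMi : ∀ h : Mi, φ (j' h) = k' (βi1 a) * k (βi.symm h) * (k' (βi1 a))⁻¹) :
    Function.Surjective φ := by

  rw [← MonoidHom.range_eq_top]
  rw [← top_le_iff, ← hgenL, Subgroup.closure_le]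
  rintro x (⟨g, rfl⟩ | ⟨m, rfl⟩)
  · exact ⟨j g, hφM g⟩
  · have key : ∀ g : M, k' (βi1 g) ∈ φ.range := by
      intro g
      have hg : g ∈ Subgroup.closure ((Gi : Set M) ∪ (fun g => a * g * a⁻¹) '' Gi) := by
        rw [hgenM]; trivial
      induction hg using Subgroup.closure_induction with
      | mem x hx =>
        rcases hx with hx | ⟨y, hy, rfl⟩
        · exact ⟨j x, (hφM x).trans (hagr' x hx)⟩
        · refine ⟨j' (βi y), ?_⟩
          rw [hφMi, MulEquiv.symm_apply_apply, hagr' y hy]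
          simp [map_mul, map_inv, mul_assoc]
      | one => exact ⟨1, by simp⟩
      | mul x y hx hy ihx ihy => simpa [map_mul] using mul_mem ihx ihy
      | inv x hx ihx => simpa [map_inv] using inv_mem ihx
    have := key (βi1.symm m)
    simpa using this
end

section
/- Let F be a group acting on a simplicial tree S without edge inversions, let v be a vertex of S such that H = St_F(v) is finitely generated and fixes no edge of S. If E ≤ F is a finite subgroup normalized by H, then E ⊆ H. -/
open SimpleGraph Walk

namespace TreeFix

variable {V : Type} {T : SimpleGraph V}

/-- A graph homomorphism from an adjacency-preserving map. -/
def homOf (f : V → V) (h : ∀ u w : V, T.Adj u w → T.Adj (f u) (f w)) : T →g T :=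
  ⟨f, fun {u w} huw => h u w huw⟩

@[simp] lemma homOf_apply (f : V → V) (h : ∀ u w : V, T.Adj u w → T.Adj (f u) (f w)) (x : V) :
    homOf f h x = f x := rfl

lemma path_eq (hT : T.IsTree) {a b : V} {p q : T.Walk a b} (hp : p.IsPath) (hq : q.IsPath) :
    p = q := by
  obtain ⟨r, -, hr⟩ := hT.existsUnique_path a b
  rw [hr p hp, hr q hq]

lemma path_length (hT : T.IsTree) {a b : V} {p : T.Walk a b} (hp : p.IsPath) :
    p.length = T.dist a b := by
  obtain ⟨q, hq, hlen⟩ := hT.isConnected.exists_path_of_dist a b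
  rw [path_eq hT hp hq, hlen]

lemma dist_split (hT : T.IsTree) {a b x : V} {p : T.Walk a b} (hp : p.IsPath)
    (hx : x ∈ p.support) : T.dist a x + T.dist x b = T.dist a b := by
  classical
  rw [← path_length hT hp, ← path_length hT (hp.takeUntil hx),
    ← path_length hT (hp.dropUntil hx), ← Walk.length_append, Walk.take_spec]

lemma mem_of_additive (hT : T.IsTree) {a b m : V}
    (h : T.dist a m + T.dist m b = T.dist a b) {p : T.Walk a b} (hp : p.IsPath) :
    m ∈ p.support := by
  obtain ⟨p1, hp1, hl1⟩ := hT.isConnected.exists_path_of_dist a m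
  obtain ⟨p2, hp2, hl2⟩ := hT.isConnected.exists_path_of_dist m b
  have hw : (p1.append p2).length = T.dist a b := by
    rw [Walk.length_append, hl1, hl2, h]
  have hpath := (p1.append p2).isPath_of_length_eq_dist hw
  rw [path_eq hT hp hpath]
  rw [Walk.mem_support_append_iff]
  exact Or.inl p1.end_mem_support

/-- Two points lying (metrically) on the geodesic from `a` to `b` are aligned. -/
lemma dist_on_geodesic (hT : T.IsTree) {a b x m : V}
    (hx : T.dist a x + T.dist x b = T.dist a b)
    (hm : T.dist a m + T.dist m b = T.dist a b)
    (hle : T.dist a x ≤ T.dist a m) :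
    T.dist a x + T.dist x m = T.dist a m := by
  classical
  obtain ⟨p, hp, hl⟩ := hT.isConnected.exists_path_of_dist a b
  have hxs : x ∈ p.support := mem_of_additive hT hx hp
  have hms : m ∈ p.support := mem_of_additive hT hm hp
  have hspec := p.take_spec hxs
  have hmem : m ∈ (p.takeUntil x hxs).support ∨ m ∈ (p.dropUntil x hxs).support := by
    have := hms
    rw [← hspec, Walk.mem_support_append_iff] at this
    exact this
  have hcomm : T.dist m x = T.dist x m := SimpleGraph.dist_comm
  rcases hmem with h1 | h2
  · have := dist_split hT (hp.takeUntil hxs) h1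
    omega
  · have := dist_split hT (hp.dropUntil hxs) h2
    omega

lemma isPath_append {a m b : V} {p : T.Walk a m} {q : T.Walk m b}
    (hp : p.IsPath) (hq : q.IsPath) (hmeet : ∀ z ∈ p.support, z ∈ q.support → z = m) :
    (p.append q).IsPath := by
  rw [Walk.isPath_def, Walk.support_append]
  refine List.Nodup.append hp.support_nodup (hq.support_nodup.tail) ?_
  intro z hzp hzq
  have hz1 : z ∈ q.support := List.mem_of_mem_tail hzq
  have hz2 : z = m := hmeet z hzp hz1
  subst hz2
  have := hq.support_nodup
  rw [q.support_eq_cons] at this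
  exact (List.nodup_cons.mp this).1 hzq

/-- Existence of a median point for three vertices of a tree. -/
lemma exists_median (hT : T.IsTree) (a b c : V) :
    ∃ m : V, T.dist a m + T.dist m b = T.dist a b ∧
      T.dist a m + T.dist m c = T.dist a c ∧
      T.dist b m + T.dist m c = T.dist b c := by
  classical
  obtain ⟨R, hR, hRl⟩ := hT.isConnected.exists_path_of_dist b c
  obtain ⟨m, hmS, hmin⟩ : ∃ m ∈ R.support, ∀ z ∈ R.support, T.dist a m ≤ T.dist a z := by
    obtain ⟨m, hm1, hm2⟩ := R.support.toFinset.exists_min_image (fun z => T.dist a z)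
      ⟨b, by simp [R.start_mem_support]⟩
    exact ⟨m, by simpa using hm1, fun z hz => hm2 z (by simpa using hz)⟩
  obtain ⟨A1, hA1, hlA⟩ := hT.isConnected.exists_path_of_dist a m
  have hmeet : ∀ z ∈ A1.support, z ∈ R.support → z = m := by
    intro z hz1 hz2
    have h1 := dist_split hT hA1 hz1
    have h2 := hmin z hz2
    have h3 : T.dist z m = 0 := by omega
    exact (hT.isConnected.dist_eq_zero_iff.mp h3)
  refine ⟨m, ?_, ?_, dist_split hT hR hmS⟩
  · -- path a → m → b
    have hq : ((R.takeUntil m hmS).reverse).IsPath := (hR.takeUntil hmS).reverse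
    have hm2 : ∀ z ∈ A1.support, z ∈ ((R.takeUntil m hmS).reverse).support → z = m := by
      intro z h1 h2
      rw [Walk.support_reverse, List.mem_reverse] at h2
      exact hmeet z h1 (R.support_takeUntil_subset hmS h2)
    have hpath := isPath_append hA1 hq hm2
    have := path_length hT hpath
    rw [Walk.length_append, Walk.length_reverse, hlA] at this
    have hbm : (R.takeUntil m hmS).length = T.dist b m := path_length hT (hR.takeUntil hmS)
    have hcm : T.dist m b = T.dist b m := SimpleGraph.dist_comm
    omega
  · -- path a → m → c
    have hq : (R.dropUntil m hmS).IsPath := hR.dropUntil hmS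
    have hm2 : ∀ z ∈ A1.support, z ∈ (R.dropUntil m hmS).support → z = m := by
      intro z h1 h2
      exact hmeet z h1 (R.support_dropUntil_subset hmS h2)
    have hpath := isPath_append hA1 hq hm2
    have := path_length hT hpath
    rw [Walk.length_append, hlA] at this
    have hmc : (R.dropUntil m hmS).length = T.dist m c := path_length hT hq
    omega

lemma getVert_map {G G' : SimpleGraph V} (f : G →g G') {a b : V} (p : G.Walk a b) (i : ℕ) :
    (p.map f).getVert i = f (p.getVert i) := by
  induction p generalizing i with
  | nil => simp [Walk.getVert]
  | cons h q ih =>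
    cases i with
    | zero => simp
    | succ n => simpa using ih n

lemma getVert_mem_support {a b : V} (p : T.Walk a b) (i : ℕ) : p.getVert i ∈ p.support := by
  induction p generalizing i with
  | nil => simp [Walk.getVert]
  | cons h q ih =>
    cases i with
    | zero => simp
    | succ n =>
      rw [Walk.getVert_cons_succ, Walk.support_cons]
      exact List.mem_cons_of_mem _ (ih n)


/-- The first vertex on the geodesic from `a` to `b`. -/
noncomputable def step (hT : T.IsTree) (a b : V) : V :=
  (hT.isConnected.exists_path_of_dist a b).choose.getVert 1

lemma step_spec (hT : T.IsTree) {a b : V} (hab : a ≠ b) :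
    T.Adj a (step hT a b) ∧ T.dist a (step hT a b) = 1 ∧
      T.dist a (step hT a b) + T.dist (step hT a b) b = T.dist a b := by
  obtain ⟨hp, hl⟩ := (hT.isConnected.exists_path_of_dist a b).choose_spec
  set p := (hT.isConnected.exists_path_of_dist a b).choose with hpdef
  have hpos : 0 < p.length := by
    rw [hl]
    exact hT.isConnected.pos_dist_of_ne hab
  have hadj : T.Adj a (step hT a b) := by
    have := p.adj_getVert_succ hpos
    rwa [p.getVert_zero] at this
  have hmem : step hT a b ∈ p.support := getVert_mem_support p 1
  refine ⟨hadj, dist_eq_one_iff_adj.mpr hadj, dist_split hT hp hmem⟩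

lemma step_equivariant (hT : T.IsTree) {f : V → V}
    (hadjf : ∀ u w : V, T.Adj u w → T.Adj (f u) (f w)) (hinj : Function.Injective f)
    (a b : V) : f (step hT a b) = step hT (f a) (f b) := by
  obtain ⟨hp, hl⟩ := (hT.isConnected.exists_path_of_dist a b).choose_spec
  set p := (hT.isConnected.exists_path_of_dist a b).choose with hpdef
  obtain ⟨hq, hql⟩ := (hT.isConnected.exists_path_of_dist (f a) (f b)).choose_spec
  set q := (hT.isConnected.exists_path_of_dist (f a) (f b)).choose with hqdef
  have hmp : (p.map (homOf f hadjf)).IsPath := Walk.map_isPath_of_injective hinj hp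
  have : q = p.map (homOf f hadjf) := path_eq hT hq hmp
  show f (p.getVert 1) = q.getVert 1
  rw [this]; refine Eq.trans ?_ (getVert_map (homOf f hadjf) p 1).symm
  rfl

/-- distance to the step vertex is at most `D - 1`. -/
lemma dist_step_le (hT : T.IsTree) {c d w : V} {D : ℕ} (hD : 2 ≤ D) (hcd : T.dist c d = D)
    (hwc : T.dist w c ≤ D) (hwd : T.dist w d ≤ D) :
    T.dist w (step hT c d) + 1 ≤ D := by
  have hne : c ≠ d := by
    rintro rfl
    rw [SimpleGraph.dist_self] at hcd; omega
  obtain ⟨-, hy1, hy2⟩ := step_spec hT hne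
  set y := step hT c d with hy
  obtain ⟨m, e1, e2, e3⟩ := exists_median hT c d w
  by_cases hs : 1 ≤ T.dist c m
  · have hE0 : T.dist c y + T.dist y m = T.dist c m :=
      dist_on_geodesic hT hy2 e1 (by rw [hy1]; exact hs)
    have htri : T.dist w y ≤ T.dist w m + T.dist m y := hT.isConnected.dist_triangle
    have c1 : T.dist c w = T.dist w c := SimpleGraph.dist_comm
    have c2 : T.dist m w = T.dist w m := SimpleGraph.dist_comm
    have c3 : T.dist m y = T.dist y m := SimpleGraph.dist_comm
    omega
  · have hm : c = m := hT.isConnected.dist_eq_zero_iff.mp (by omega)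
    subst hm
    have c1 : T.dist d c = T.dist c d := SimpleGraph.dist_comm
    have c2 : T.dist c w = T.dist w c := SimpleGraph.dist_comm
    have c3 : T.dist d w = T.dist w d := SimpleGraph.dist_comm
    have hcw : T.dist w c = 0 := by omega
    have : w = c := hT.isConnected.dist_eq_zero_iff.mp (by omega)
    subst this
    omega

lemma key (hT : T.IsTree) {a b c d : V} {D : ℕ} (hD : 2 ≤ D)
    (hab : T.dist a b = D) (hcd : T.dist c d = D)
    (hac : T.dist a c ≤ D) (had : T.dist a d ≤ D)
    (hbc : T.dist b c ≤ D) (hbd : T.dist b d ≤ D) :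
    T.dist (step hT a b) (step hT c d) + 2 ≤ D := by
  have hne : a ≠ b := by
    rintro rfl
    rw [SimpleGraph.dist_self] at hab; omega
  obtain ⟨-, hx1, hx2⟩ := step_spec hT hne
  set x := step hT a b with hx
  set y := step hT c d with hy
  have hay : T.dist a y + 1 ≤ D := dist_step_le hT hD hcd hac had
  have hby : T.dist b y + 1 ≤ D := dist_step_le hT hD hcd hbc hbd
  obtain ⟨m, e1, e2, e3⟩ := exists_median hT a b y
  by_cases ht : 1 ≤ T.dist a m
  · have hE0 : T.dist a x + T.dist x m = T.dist a m :=
      dist_on_geodesic hT hx2 e1 (by rw [hx1]; exact ht)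
    have htri : T.dist x y ≤ T.dist x m + T.dist m y := hT.isConnected.dist_triangle
    omega
  · have hm : a = m := hT.isConnected.dist_eq_zero_iff.mp (by omega)
    subst hm
    have c1 : T.dist b a = T.dist a b := SimpleGraph.dist_comm
    omega


lemma fixed_point_aux (hT : T.IsTree) (S : Set (V → V))
    (hdistS : ∀ f ∈ S, ∀ u w : V, T.dist (f u) (f w) = T.dist u w)
    (hadjS : ∀ f ∈ S, ∀ u w : V, T.Adj u w → T.Adj (f u) (f w))
    (hninvS : ∀ f ∈ S, ∀ u w : V, T.Adj u w → ¬(f u = w ∧ f w = u)) (n : ℕ) :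
    ∀ A : Finset V, A.Nonempty → (∀ f ∈ S, ∀ a ∈ A, f a ∈ A) →
      (∀ a ∈ A, ∀ b ∈ A, T.dist a b ≤ n) → ∃ p : V, ∀ f ∈ S, f p = p := by
  classical
  have hinj : ∀ f ∈ S, Function.Injective f := by
    intro f hf u w huw
    have h0 : T.dist u w = 0 := by rw [← hdistS f hf, huw, SimpleGraph.dist_self]
    exact hT.isConnected.dist_eq_zero_iff.mp h0
  induction n using Nat.strong_induction_on with
  | _ n ih =>
  intro A hA hstab hbound
  obtain ⟨a0, ha0⟩ := hA
  have hPne : (A ×ˢ A).Nonempty := ⟨(a0, a0), Finset.mem_product.mpr ⟨ha0, ha0⟩⟩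
  obtain ⟨⟨a, b⟩, habm, habD⟩ := Finset.exists_mem_eq_sup' hPne (fun z => T.dist z.1 z.2)
  set D := (A ×ˢ A).sup' hPne (fun z => T.dist z.1 z.2) with hD
  have habD' : D = T.dist a b := habD
  have haA : a ∈ A := (Finset.mem_product.mp habm).1
  have hbA : b ∈ A := (Finset.mem_product.mp habm).2
  have hDle : ∀ u ∈ A, ∀ w ∈ A, T.dist u w ≤ D := fun u hu w hw =>
    Finset.le_sup' (f := fun z : V × V => T.dist z.1 z.2) (b := (u, w))
      (Finset.mem_product.mpr ⟨hu, hw⟩)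
  by_cases hD0 : D = 0
  · refine ⟨a0, fun f hf => ?_⟩
    have h1 := hDle a0 ha0 (f a0) (hstab f hf a0 ha0)
    exact (hT.isConnected.dist_eq_zero_iff.mp (by omega)).symm
  by_cases hD1 : D = 1
  · have hab1 : T.dist a b = 1 := by omega
    have hne : a ≠ b := by
      rintro rfl; rw [SimpleGraph.dist_self] at hab1; omega
    have hsub : ∀ z ∈ A, z = a ∨ z = b := by
      intro z hz
      by_contra hcon
      push_neg at hcon
      obtain ⟨hza, hzb⟩ := hcon
      have d1 : T.dist z a = 1 := by
        have h1 := hDle z hz a haA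
        have h2 := hT.isConnected.pos_dist_of_ne hza
        omega
      have d2 : T.dist z b = 1 := by
        have h1 := hDle z hz b hbA
        have h2 := hT.isConnected.pos_dist_of_ne hzb
        omega
      obtain ⟨m, e1, e2, e3⟩ := exists_median hT z a b
      have c1 : T.dist m a = T.dist a m := SimpleGraph.dist_comm
      omega
    refine ⟨a, fun f hf => ?_⟩
    have hfa := hstab f hf a haA
    have hfb := hstab f hf b hbA
    have hadjab : T.Adj a b := SimpleGraph.dist_eq_one_iff_adj.mp hab1
    rcases hsub (f a) hfa with h1 | h1
    · exact h1
    · have hfb2 : f b = a := by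
        rcases hsub (f b) hfb with h2 | h2
        · exact h2
        · exact absurd (hinj f hf (h1.trans h2.symm)) hne
      exact ((hninvS f hf a b hadjab) ⟨h1, hfb2⟩).elim
  · have hD2 : 2 ≤ D := by omega
    set P := (A ×ˢ A).filter (fun z => T.dist z.1 z.2 = D) with hP
    set A' := P.image (fun z => step hT z.1 z.2) with hA'def
    have hA' : A'.Nonempty :=
      ⟨step hT a b, Finset.mem_image_of_mem _ (Finset.mem_filter.mpr ⟨habm, habD'.symm⟩)⟩
    have hstab' : ∀ f ∈ S, ∀ x ∈ A', f x ∈ A' := by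
      intro f hf x hx
      obtain ⟨⟨u, w⟩, huw, rfl⟩ := Finset.mem_image.mp hx
      obtain ⟨hmem, hd⟩ := Finset.mem_filter.mp huw
      rw [step_equivariant hT (hadjS f hf) (hinj f hf)]
      refine Finset.mem_image.mpr ⟨(f u, f w), Finset.mem_filter.mpr ⟨Finset.mem_product.mpr
        ⟨hstab f hf _ (Finset.mem_product.mp hmem).1,
         hstab f hf _ (Finset.mem_product.mp hmem).2⟩, ?_⟩, rfl⟩
      show T.dist (f u) (f w) = D
      rw [hdistS f hf u w]
      exact hd
    have hbound' : ∀ x ∈ A', ∀ y ∈ A', T.dist x y ≤ D - 2 := by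
      intro x hx y hy
      obtain ⟨⟨u1, w1⟩, h1, rfl⟩ := Finset.mem_image.mp hx
      obtain ⟨⟨u2, w2⟩, h2, rfl⟩ := Finset.mem_image.mp hy
      obtain ⟨hm1, hd1⟩ := Finset.mem_filter.mp h1
      obtain ⟨hm2, hd2⟩ := Finset.mem_filter.mp h2
      have hu1 := (Finset.mem_product.mp hm1).1
      have hw1 := (Finset.mem_product.mp hm1).2
      have hu2 := (Finset.mem_product.mp hm2).1
      have hw2 := (Finset.mem_product.mp hm2).2
      have := key hT hD2 hd1 hd2 (hDle u1 hu1 u2 hu2) (hDle u1 hu1 w2 hw2)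
        (hDle w1 hw1 u2 hu2) (hDle w1 hw1 w2 hw2)
      omega
    have hDn : D ≤ n := by
      have := hbound a haA b hbA
      rw [habD']
      omega
    exact ih (D - 2) (by omega) A' hA' hstab' hbound'


lemma list_map_fix {f : V → V} : ∀ l : List V, l.map f = l → ∀ z ∈ l, f z = z := by
  intro l
  induction l with
  | nil => intro _ z hz; simp at hz
  | cons a t ih =>
    intro h z hz
    simp only [List.map_cons, List.cons.injEq] at h
    rcases List.mem_cons.mp hz with rfl | hz'
    · exact h.1
    · exact ih h.2 z hz'

lemma fixed_on_path (hT : T.IsTree) {f : V → V}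
    (hadjf : ∀ u w : V, T.Adj u w → T.Adj (f u) (f w)) (hinj : Function.Injective f)
    {a b : V} (ha : f a = a) (hb : f b = b) {p : T.Walk a b} (hp : p.IsPath) :
    ∀ z ∈ p.support, f z = z := by
  have h2 : ((p.map (homOf f hadjf)).copy ha hb).IsPath := by
    refine (Walk.isPath_copy _ _ _).mpr ?_
    exact Walk.map_isPath_of_injective hinj hp
  have heq : (p.map (homOf f hadjf)).copy ha hb = p := path_eq hT h2 hp
  have hsup : p.support.map f = p.support := by
    conv_rhs => rw [← heq]
    refine Eq.trans ?_ ((Walk.support_copy _ _ _).trans (Walk.support_map _ _)).symm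
    rfl
  exact list_map_fix _ hsup

end TreeFix

open TreeFix

/-- Let `F` act on a simplicial tree `S` without edge inversions, and let `v`
be a vertex whose stabilizer `H` is finitely generated and fixes no edge of
`S`.  If `E ≤ F` is a finite subgroup normalized by `H`, then `E ⊆ H`. -/
theorem stmt8 {F V : Type} [Group F] (T : SimpleGraph V) (hT : T.IsTree)
    (ρ : F →* Equiv.Perm V)
    (hadj : ∀ (g : F) (u w : V), T.Adj u w → T.Adj (ρ g u) (ρ g w))
    (hninv : ∀ (g : F) (u w : V), T.Adj u w → ¬(ρ g u = w ∧ ρ g w = u))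
    (v : V) (H : Subgroup F) (hH : (H : Set F) = {g : F | ρ g v = v})
    (hfg : H.FG)
    (hnoedge : ∀ u w : V, T.Adj u w → ∃ h ∈ H, ¬(ρ h u = u ∧ ρ h w = w))
    (E : Subgroup F) (hEfin : (E : Set F).Finite)
    (hnorm : ∀ h ∈ H, ∀ e ∈ E, h * e * h⁻¹ ∈ E) :
    (E : Set F) ⊆ (H : Set F) := by
  classical
  have hconn := hT.isConnected
  have hinj : ∀ g : F, Function.Injective (ρ g) := fun g => (ρ g).injective
  have hperm : ∀ (g : F) (x : V), ρ g⁻¹ (ρ g x) = x := by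
    intro g x
    have h1 : ρ g⁻¹ * ρ g = 1 := by rw [← map_mul, inv_mul_cancel, map_one]
    calc ρ g⁻¹ (ρ g x) = (ρ g⁻¹ * ρ g) x := rfl
      _ = x := by rw [h1]; rfl
  have hdist_le : ∀ (g : F) (u w : V), T.dist (ρ g u) (ρ g w) ≤ T.dist u w := by
    intro g u w
    obtain ⟨p, hp, hl⟩ := hconn.exists_path_of_dist u w
    have := SimpleGraph.dist_le (p.map (homOf (⇑(ρ g)) (hadj g)))
    rwa [Walk.length_map, hl] at this
  have hdist : ∀ (g : F) (u w : V), T.dist (ρ g u) (ρ g w) = T.dist u w := by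
    intro g u w
    refine le_antisymm (hdist_le g u w) ?_
    have := hdist_le g⁻¹ (ρ g u) (ρ g w)
    rwa [hperm g u, hperm g w] at this
  -- the orbit of v under E
  set A : Finset V := hEfin.toFinset.image (fun e => ρ e v) with hAdef
  have hAne : A.Nonempty :=
    ⟨ρ 1 v, Finset.mem_image_of_mem _ (hEfin.mem_toFinset.mpr E.one_mem)⟩
  set S : Set (V → V) := (fun e : F => ⇑(ρ e)) '' (E : Set F) with hSdef
  have hdistS : ∀ f ∈ S, ∀ u w : V, T.dist (f u) (f w) = T.dist u w := by
    rintro f ⟨e, he, rfl⟩ u w; exact hdist e u w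
  have hadjS : ∀ f ∈ S, ∀ u w : V, T.Adj u w → T.Adj (f u) (f w) := by
    rintro f ⟨e, he, rfl⟩ u w huw; exact hadj e u w huw
  have hninvS : ∀ f ∈ S, ∀ u w : V, T.Adj u w → ¬(f u = w ∧ f w = u) := by
    rintro f ⟨e, he, rfl⟩ u w huw; exact hninv e u w huw
  have hstabA : ∀ f ∈ S, ∀ a ∈ A, f a ∈ A := by
    rintro f ⟨e, he, rfl⟩ a ha
    obtain ⟨e', he', rfl⟩ := Finset.mem_image.mp ha
    refine Finset.mem_image.mpr ⟨e * e',
      hEfin.mem_toFinset.mpr (E.mul_mem he (hEfin.mem_toFinset.mp he')), ?_⟩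
    rw [map_mul]; rfl
  have hboundA : ∀ a ∈ A, ∀ b ∈ A,
      T.dist a b ≤ (A ×ˢ A).sup (fun z => T.dist z.1 z.2) := by
    intro x hx y hy
    exact Finset.le_sup (f := fun z : V × V => T.dist z.1 z.2) (b := (x, y))
      (Finset.mem_product.mpr ⟨hx, hy⟩)
  obtain ⟨p, hp⟩ := fixed_point_aux hT S hdistS hadjS hninvS
    ((A ×ˢ A).sup (fun z => T.dist z.1 z.2)) A hAne hstabA hboundA
  have hpfix : ∀ e ∈ (E : Set F), ρ e p = p := fun e he => hp _ ⟨e, he, rfl⟩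
  -- nearest E-fixed point to v
  set K : Set ℕ := {k | ∃ u : V, (∀ e ∈ (E : Set F), ρ e u = u) ∧ T.dist v u = k} with hK
  have hKne : K.Nonempty := ⟨T.dist v p, p, hpfix, rfl⟩
  obtain ⟨p0, hp0fix, hp0d⟩ : ∃ u : V, (∀ e ∈ (E : Set F), ρ e u = u) ∧ T.dist v u = sInf K :=
    Nat.sInf_mem hKne
  have hminK : ∀ u : V, (∀ e ∈ (E : Set F), ρ e u = u) → sInf K ≤ T.dist v u :=
    fun u hu => Nat.sInf_le ⟨u, hu, rfl⟩
  have huniq : ∀ q : V, (∀ e ∈ (E : Set F), ρ e q = q) → T.dist v q = sInf K → q = p0 := by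
    intro q hq hdq
    obtain ⟨m, e1, e2, e3⟩ := exists_median hT p0 q v
    have hmfix : ∀ e ∈ (E : Set F), ρ e m = m := by
      intro e he
      obtain ⟨R, hR, -⟩ := hconn.exists_path_of_dist p0 q
      have hmR : m ∈ R.support := mem_of_additive hT e1 hR
      exact fixed_on_path hT (hadj e) (hinj e) (hp0fix e he) (hq e he) hR m hmR
    have h1 := hminK m hmfix
    have c1 : T.dist p0 v = T.dist v p0 := SimpleGraph.dist_comm
    have c2 : T.dist q v = T.dist v q := SimpleGraph.dist_comm
    have c3 : T.dist v m = T.dist m v := SimpleGraph.dist_comm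
    have h2 : p0 = m := hconn.dist_eq_zero_iff.mp (by omega)
    have h3 : q = m := hconn.dist_eq_zero_iff.mp (by omega)
    exact h3.trans h2.symm
  have hp0H : ∀ h ∈ (H : Set F), ρ h p0 = p0 := by
    intro h hh
    have hhv : ρ h v = v := by
      have h0 : h ∈ {g : F | ρ g v = v} := hH ▸ hh
      exact h0
    have hfix2 : ∀ e ∈ (E : Set F), ρ e (ρ h p0) = ρ h p0 := by
      intro e he
      have hmem : h⁻¹ * e * h ∈ E := by
        have := hnorm h⁻¹ (H.inv_mem hh) e he
        simpa using this
      calc ρ e (ρ h p0) = ρ (e * h) p0 := by rw [map_mul]; rfl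
        _ = ρ (h * (h⁻¹ * e * h)) p0 := by congr 2; group
        _ = ρ h (ρ (h⁻¹ * e * h) p0) := by rw [map_mul]; rfl
        _ = ρ h p0 := by rw [hp0fix _ hmem]
    have hd : T.dist v (ρ h p0) = sInf K := by
      conv_lhs => rw [← hhv]
      rw [hdist h v p0, hp0d]
    exact huniq _ hfix2 hd
  intro e he
  rw [hH]
  show ρ e v = v
  by_cases hvp : v = p0
  · rw [hvp]
    exact hp0fix e he
  · exfalso
    obtain ⟨hadj0, -, -⟩ := step_spec hT hvp
    obtain ⟨h, hhmem, hcon⟩ := hnoedge v (step hT v p0) hadj0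
    have hhv : ρ h v = v := by
      have h0 : h ∈ {g : F | ρ g v = v} := hH ▸ (hhmem : h ∈ (H : Set F))
      exact h0
    have hhu : ρ h (step hT v p0) = step hT v p0 := by
      rw [step_equivariant hT (hadj h) (hinj h), hhv, hp0H h hhmem]
    exact hcon ⟨hhv, hhu⟩
end

section
/- Let M be a group with subgroups G_{i-1} ≤ G_i and an element a ∈ M centralizing G_{i-1}. Suppose that for every c ∈ G_i \ G_{i-1}, the subgroup ⟨G_i, (a c a⁻¹) G_i (a c a⁻¹)⁻¹⟩ is not equal to G_i. Then G_i ∩ a G_i a⁻¹ = G_{i-1}. -/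
/-- Let `Gᵢ₋₁ ≤ Gᵢ ≤ M` with `a ∈ M` centralizing `Gᵢ₋₁`.  If for every
`c ∈ Gᵢ \ Gᵢ₋₁` the subgroup `⟨Gᵢ, (aca⁻¹) Gᵢ (aca⁻¹)⁻¹⟩` is different from
`Gᵢ`, then `Gᵢ ∩ a Gᵢ a⁻¹ = Gᵢ₋₁`. -/
theorem stmt13 {M : Type*} [Group M] (Gi1 Gi : Subgroup M) (hle : Gi1 ≤ Gi)
    (a : M) (hcent : ∀ g ∈ Gi1, a * g = g * a)
    (hyp : ∀ c ∈ Gi, c ∉ Gi1 →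
      Subgroup.closure ((Gi : Set M) ∪
        (fun g => (a * c * a⁻¹) * g * (a * c * a⁻¹)⁻¹) '' Gi) ≠ Gi) :
    (Gi : Set M) ∩ ((fun g => a * g * a⁻¹) '' Gi) = (Gi1 : Set M) := by
  ext x
  constructor
  · rintro ⟨hxGi, c, hc, rfl⟩
    simp only at hxGi ⊢
    by_contra hcn
    have hc1 : c ∉ Gi1 := by
      intro h
      apply hcn
      have he : a * c * a⁻¹ = c := by rw [hcent c h]; group
      rw [he]; exact h
    apply hyp c hc hc1
    apply le_antisymm
    · rw [Subgroup.closure_le]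
      rintro y (hy | ⟨g, hg, rfl⟩)
      · exact hy
      · exact mul_mem (mul_mem hxGi hg) (inv_mem hxGi)
    · intro y hy
      exact Subgroup.subset_closure (Or.inl hy)
  · intro hx
    exact ⟨hle hx, x, hle hx, by show a * x * a⁻¹ = x; rw [hcent x hx]; group⟩
end

section
/- Thompson's group V is generated by the pointwise stabilizer of [0, 1/2^{i+1}) together with the pointwise stabilizer of [1/2^{i+1}, 1/2^i), for every i ≥ 1. -/
/-- A real number is dyadic rational. -/
def IsDyadic (x : ℝ) : Prop := ∃ (z : ℤ) (n : ℕ), x = (z : ℝ) / 2 ^ n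

/-- The unit interval `[0,1)`. -/
abbrev UnitIco : Type := ↥(Set.Ico (0 : ℝ) 1)

/-- A permutation of `[0,1)` belongs to Thompson's group `V` if it is piecewise
linear with finitely many pieces, with dyadic breakpoints, slopes powers of `2`
and dyadic offsets (hence right continuous on each piece and preserving dyadic
rationals). -/
def IsThompsonV (f : Equiv.Perm UnitIco) : Prop :=
  ∃ (n : ℕ) (x : Fin (n + 1) → ℝ) (m : Fin n → ℤ) (c : Fin n → ℝ),
    x 0 = 0 ∧ x (Fin.last n) = 1 ∧ StrictMono x ∧
    (∀ k, IsDyadic (x k)) ∧ (∀ k, IsDyadic (c k)) ∧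
    ∀ (k : Fin n) (t : UnitIco), x k.castSucc ≤ (t : ℝ) → (t : ℝ) < x k.succ →
      ((f t : ℝ)) = (2 : ℝ) ^ (m k) * (t : ℝ) + c k

/-- The function underlying the element `aᵢ ∈ V`, which swaps the intervals
`[0, 1/2^(i+1))` and `[1/2^(i+1), 1/2^i)` by translation and is the identity on
`[1/2^i, 1)`. -/
noncomputable def aiFun (i : ℕ) (x : ℝ) : ℝ :=
  if x < 1 / 2 ^ (i + 1) then x + 1 / 2 ^ (i + 1)
  else if x < 1 / 2 ^ i then x - 1 / 2 ^ (i + 1)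
  else x

/-- The pointwise stabilizer in `V` of the interval `[0, 1/2^(i+1))`,
as a subset of the permutations of `[0,1)`. -/
def GThompson (i : ℕ) : Set (Equiv.Perm UnitIco) :=
  {f | IsThompsonV f ∧ ∀ t : UnitIco, (t : ℝ) < 1 / 2 ^ (i + 1) → f t = t}


namespace TP

lemma nat_lt_div_succ_mul (n k : ℕ) (hk : 0 < k) : n < (n / k + 1) * k := by
  rw [add_mul, one_mul]
  have h1 := Nat.div_add_mod n k
  have h2 := Nat.mod_lt n hk
  have h3 : n / k * k = k * (n / k) := Nat.mul_comm _ _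
  omega

structure SDI : Type where
  lev : ℕ
  idx : ℕ
  hidx : idx < 2 ^ lev

namespace SDI

noncomputable def left (I : SDI) : ℝ := I.idx / 2 ^ I.lev
noncomputable def right (I : SDI) : ℝ := (I.idx + 1) / 2 ^ I.lev

lemma left_nonneg (I : SDI) : 0 ≤ I.left := by unfold left; positivity

lemma left_lt_right (I : SDI) : I.left < I.right := by
  unfold left right
  have h : (0:ℝ) < 2 ^ I.lev := by positivity
  rw [div_lt_div_iff₀ h h]
  nlinarith

lemma right_le_one (I : SDI) : I.right ≤ 1 := by
  unfold right
  rw [div_le_one (by positivity)]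
  exact_mod_cast I.hidx

lemma right_sub_left (I : SDI) : I.right - I.left = (2:ℝ) ^ (-(I.lev:ℤ)) := by
  unfold left right
  rw [zpow_neg, zpow_natCast]
  field_simp
  ring

lemma left_lt_one (I : SDI) : I.left < 1 := lt_of_lt_of_le I.left_lt_right I.right_le_one

def Mem (x : ℝ) (I : SDI) : Prop := I.left ≤ x ∧ x < I.right

lemma left_mem (I : SDI) : Mem I.left I := ⟨le_refl _, I.left_lt_right⟩

lemma mem_Ico {x : ℝ} {I : SDI} (h : Mem x I) : 0 ≤ x ∧ x < 1 :=
  ⟨le_trans I.left_nonneg h.1, lt_of_lt_of_le h.2 I.right_le_one⟩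

/-- the canonical affine increasing map sending `I` onto `K`. -/
noncomputable def can (I K : SDI) (x : ℝ) : ℝ :=
  2 ^ ((I.lev : ℤ) - K.lev) * (x - I.left) + K.left

lemma can_comp (I K L : SDI) (x : ℝ) : can K L (can I K x) = can I L x := by
  unfold can
  have h : (2:ℝ) ^ ((K.lev:ℤ) - L.lev) * (2:ℝ) ^ ((I.lev:ℤ) - K.lev)
      = 2 ^ ((I.lev:ℤ) - L.lev) := by
    rw [← zpow_add₀ (two_ne_zero)]; ring_nf
  linear_combination (x - I.left) * h

lemma can_self (I : SDI) (x : ℝ) : can I I x = x := by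
  unfold can; simp

lemma can_inv (I K : SDI) (x : ℝ) : can K I (can I K x) = x := by
  rw [can_comp, can_self]

lemma can_mem {x : ℝ} {I : SDI} (K : SDI) (h : Mem x I) : Mem (can I K x) K := by
  have hpos : (0:ℝ) < 2 ^ ((I.lev : ℤ) - K.lev) := by positivity
  constructor
  · unfold can; nlinarith [h.1]
  · unfold can
    have h1 : x - I.left < 2 ^ (-(I.lev:ℤ)) := by
      have := I.right_sub_left; nlinarith [h.2]
    have h2 : (2:ℝ) ^ ((I.lev : ℤ) - K.lev) * (2:ℝ) ^ (-(I.lev:ℤ)) = 2 ^ (-(K.lev:ℤ)) := by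
      rw [← zpow_add₀ (two_ne_zero)]; ring_nf
    have h3 := K.right_sub_left
    nlinarith [mul_lt_mul_of_pos_left h1 hpos]

def Sub (I J : SDI) : Prop := J.left ≤ I.left ∧ I.right ≤ J.right

def Disj (I J : SDI) : Prop := I.right ≤ J.left ∨ J.right ≤ I.left

lemma Sub.rfl (I : SDI) : Sub I I := ⟨le_refl _, le_refl _⟩

lemma Sub.trans {I J K : SDI} (h1 : Sub I J) (h2 : Sub J K) : Sub I K :=
  ⟨le_trans h2.1 h1.1, le_trans h1.2 h2.2⟩

lemma Disj.symm {I J : SDI} (h : Disj I J) : Disj J I := h.elim Or.inr Or.inl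

lemma mem_of_sub {x : ℝ} {I J : SDI} (h : Mem x I) (hs : Sub I J) : Mem x J :=
  ⟨le_trans hs.1 h.1, lt_of_lt_of_le h.2 hs.2⟩

lemma not_mem_of_disj {x : ℝ} {I J : SDI} (hd : Disj I J) (h : Mem x I) : ¬ Mem x J := by
  intro h'
  rcases hd with hd | hd
  · linarith [h.2, h'.1]
  · linarith [h.1, h'.2]

lemma Disj.mono {I J I' J' : SDI} (hd : Disj I J) (h1 : Sub I' I) (h2 : Sub J' J) :
    Disj I' J' := by
  rcases hd with hd | hd
  · exact Or.inl (le_trans h1.2 (le_trans hd h2.1))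
  · exact Or.inr (le_trans h2.2 (le_trans hd h1.1))

lemma not_disj_of_mem {x : ℝ} {I J : SDI} (h1 : Mem x I) (h2 : Mem x J) : ¬ Disj I J :=
  fun hd => not_mem_of_disj hd h1 h2

lemma sub_lev {I J : SDI} (h : Sub I J) : J.lev ≤ I.lev := by
  have h1 := I.right_sub_left
  have h2 := J.right_sub_left
  have h3 : (2:ℝ) ^ (-(I.lev:ℤ)) ≤ (2:ℝ) ^ (-(J.lev:ℤ)) := by
    rw [← h1, ← h2]; linarith [h.1, h.2]
  have h4 := (zpow_le_zpow_iff_right₀ (by norm_num : (1:ℝ) < 2)).mp h3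
  omega

/-- helper: `(a : ℝ)/2^p ≤ b/2^q ↔ a ≤ b * 2^(p-q)` when `q ≤ p`. -/
lemma div_pow_le_div_pow {a b p q : ℕ} (h : q ≤ p) :
    (a : ℝ) / 2 ^ p ≤ (b : ℝ) / 2 ^ q ↔ a ≤ b * 2 ^ (p - q) := by
  have key : (2:ℝ) ^ p = 2 ^ q * 2 ^ (p - q) := by
    rw [← pow_add]; congr 1; omega
  rw [div_le_div_iff₀ (by positivity) (by positivity), key,
    show (b:ℝ) * (2 ^ q * 2 ^ (p-q)) = ((b:ℝ) * 2 ^ (p-q)) * 2 ^ q by ring,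
    mul_le_mul_iff_of_pos_right (by positivity : (0:ℝ) < 2 ^ q)]
  constructor
  · intro hh; exact_mod_cast hh
  · intro hh; exact_mod_cast hh

/-- helper: `(a : ℝ)/2^q ≤ b/2^p ↔ a * 2^(p-q) ≤ b` when `q ≤ p`. -/
lemma div_pow_le_div_pow' {a b p q : ℕ} (h : q ≤ p) :
    (a : ℝ) / 2 ^ q ≤ (b : ℝ) / 2 ^ p ↔ a * 2 ^ (p - q) ≤ b := by
  have key : (2:ℝ) ^ p = 2 ^ q * 2 ^ (p - q) := by
    rw [← pow_add]; congr 1; omega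
  rw [div_le_div_iff₀ (by positivity) (by positivity), key,
    show (a:ℝ) * (2 ^ q * 2 ^ (p-q)) = ((a:ℝ) * 2 ^ (p-q)) * 2 ^ q by ring,
    mul_le_mul_iff_of_pos_right (by positivity : (0:ℝ) < 2 ^ q)]
  constructor
  · intro hh; exact_mod_cast hh
  · intro hh; exact_mod_cast hh

lemma sub_iff_nat {I J : SDI} :
    Sub I J ↔ J.lev ≤ I.lev ∧ J.idx * 2 ^ (I.lev - J.lev) ≤ I.idx ∧
      I.idx + 1 ≤ (J.idx + 1) * 2 ^ (I.lev - J.lev) := by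
  have cast1 : ∀ n : ℕ, ((n:ℝ) + 1) = ((n + 1 : ℕ):ℝ) := by intro n; push_cast; ring
  constructor
  · intro h
    have hl := sub_lev h
    refine ⟨hl, ?_, ?_⟩
    · have h1 := h.1
      unfold left at h1
      rwa [div_pow_le_div_pow' hl] at h1
    · have h2 := h.2
      unfold right at h2
      rw [cast1, cast1, div_pow_le_div_pow hl] at h2
      exact h2
  · rintro ⟨hl, h1, h2⟩
    constructor
    · unfold left; rw [div_pow_le_div_pow' hl]; exact h1
    · unfold right; rw [cast1, cast1, div_pow_le_div_pow hl]; exact h2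

lemma ext_of {I J : SDI} (h1 : I.left = J.left) (h2 : I.right = J.right) : I = J := by
  have hlen : (2:ℝ) ^ (-(I.lev:ℤ)) = (2:ℝ) ^ (-(J.lev:ℤ)) := by
    rw [← I.right_sub_left, ← J.right_sub_left, h1, h2]
  have hlev : I.lev = J.lev := by
    have := zpow_right_injective₀ (by norm_num : (0:ℝ) < 2) (by norm_num) hlen
    omega
  have hidx : I.idx = J.idx := by
    unfold left at h1
    rw [hlev] at h1
    have h2pos : ((2:ℝ) ^ J.lev) ≠ 0 := by positivity
    field_simp at h1
    exact_mod_cast h1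
  cases I; cases J; simp_all

lemma aux_tri {I J : SDI} (h : J.lev ≤ I.lev) : Sub I J ∨ Disj I J := by
  set d := I.lev - J.lev with hd
  have h2d : 0 < 2 ^ d := by positivity
  by_cases hq : I.idx / 2 ^ d = J.idx
  · left
    rw [sub_iff_nat]
    refine ⟨h, ?_, ?_⟩
    · rw [← hq]; exact Nat.div_mul_le_self _ _
    · have h5 := nat_lt_div_succ_mul I.idx (2 ^ d) h2d
      rw [hq] at h5
      rw [← hd]
      omega
  · right
    rcases Nat.lt_or_ge (I.idx / 2 ^ d) J.idx with hlt | hge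
    · left
      unfold right left
      rw [show ((I.idx:ℝ)+1) = ((I.idx+1 : ℕ):ℝ) by push_cast; ring]
      rw [div_pow_le_div_pow h]
      calc I.idx + 1 ≤ (I.idx / 2^d + 1) * 2 ^ d := nat_lt_div_succ_mul I.idx _ h2d
        _ ≤ J.idx * 2 ^ d := Nat.mul_le_mul_right _ hlt
    · right
      have hgt : J.idx + 1 ≤ I.idx / 2 ^ d := by omega
      unfold right left
      rw [show ((J.idx:ℝ)+1) = ((J.idx+1 : ℕ):ℝ) by push_cast; ring]
      rw [div_pow_le_div_pow' h]
      calc (J.idx + 1) * 2 ^ d ≤ (I.idx / 2 ^ d) * 2 ^ d := Nat.mul_le_mul_right _ hgt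
        _ ≤ I.idx := Nat.div_mul_le_self _ _

lemma trichotomy (I J : SDI) : Sub I J ∨ Sub J I ∨ Disj I J := by
  rcases le_total J.lev I.lev with h | h
  · rcases aux_tri h with h' | h'
    · exact Or.inl h'
    · exact Or.inr (Or.inr h')
  · rcases aux_tri h with h' | h'
    · exact Or.inr (Or.inl h')
    · exact Or.inr (Or.inr h'.symm)

lemma sub_of_not_disj {I J : SDI} (h : J.lev ≤ I.lev) (hnd : ¬ Disj I J) : Sub I J :=
  (aux_tri h).resolve_right hnd

/-- if `I ⊆ J` and `I.lev ≤ J.lev` then `I = J`. -/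
lemma eq_of_sub_of_lev {I J : SDI} (h : Sub I J) (hl : I.lev ≤ J.lev) : I = J := by
  have hl2 := sub_lev h
  have hlev : I.lev = J.lev := le_antisymm hl hl2
  have e1 := I.right_sub_left
  have e2 := J.right_sub_left
  rw [hlev] at e1
  apply ext_of
  · linarith [h.1, h.2]
  · linarith [h.1, h.2]


lemma sub_idx_ge {I J : SDI} (h : Sub I J) : J.idx * 2 ^ (I.lev - J.lev) ≤ I.idx :=
  (sub_iff_nat.mp h).2.1

/-- image of a sub-interval `J ⊆ I` under the canonical map `I → K`. -/
def mapSDI (I K J : SDI) (h : Sub J I) : SDI where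
  lev := K.lev + (J.lev - I.lev)
  idx := K.idx * 2 ^ (J.lev - I.lev) + (J.idx - I.idx * 2 ^ (J.lev - I.lev))
  hidx := by
    obtain ⟨hl, h1, h2⟩ := sub_iff_nat.mp h
    have hK := K.hidx
    have h2d : 0 < 2 ^ (J.lev - I.lev) := by positivity
    rw [pow_add]
    have e1 : (I.idx + 1) * 2 ^ (J.lev - I.lev) = I.idx * 2 ^ (J.lev - I.lev) + 2 ^ (J.lev - I.lev) := by ring
    have e2 : (K.idx + 1) * 2 ^ (J.lev - I.lev) = K.idx * 2 ^ (J.lev - I.lev) + 2 ^ (J.lev - I.lev) := by ring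
    have e3 : (K.idx + 1) * 2 ^ (J.lev - I.lev) ≤ 2 ^ K.lev * 2 ^ (J.lev - I.lev) :=
      Nat.mul_le_mul_right _ hK
    omega

lemma mapSDI_left {I K J : SDI} (h : Sub J I) :
    (mapSDI I K J h).left = K.left + 2 ^ ((I.lev:ℤ) - K.lev) * (J.left - I.left) := by
  obtain ⟨hl, h1, h2⟩ := sub_iff_nat.mp h
  unfold mapSDI left
  simp only
  have hd : J.lev = I.lev + (J.lev - I.lev) := by omega
  set d := J.lev - I.lev with hdd
  have hcast : ((K.idx * 2 ^ d + (J.idx - I.idx * 2 ^ d) : ℕ) : ℝ)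
      = (K.idx : ℝ) * 2 ^ d + ((J.idx : ℝ) - (I.idx : ℝ) * 2 ^ d) := by
    push_cast [h1]
    ring
  rw [hcast]
  have hz : (2:ℝ) ^ ((I.lev:ℤ) - K.lev) = 2 ^ I.lev / 2 ^ K.lev := by
    rw [zpow_sub₀ (two_ne_zero), zpow_natCast, zpow_natCast]
  rw [hz, hd, pow_add]
  have p1 : ((2:ℝ)) ^ I.lev ≠ 0 := by positivity
  have p2 : ((2:ℝ)) ^ K.lev ≠ 0 := by positivity
  have p3 : ((2:ℝ)) ^ d ≠ 0 := by positivity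
  field_simp
  ring

lemma mapSDI_lev {I K J : SDI} (h : Sub J I) :
    ((J.lev : ℤ) - (mapSDI I K J h).lev) = (I.lev : ℤ) - K.lev := by
  have := sub_lev h
  unfold mapSDI
  simp only
  push_cast [Nat.cast_sub this]
  ring

lemma can_mapSDI {I K J : SDI} (h : Sub J I) (x : ℝ) :
    can I K x = can J (mapSDI I K J h) x := by
  unfold can
  rw [mapSDI_lev h, mapSDI_left h]
  ring

lemma mapSDI_sub {I K J : SDI} (h : Sub J I) : Sub (mapSDI I K J h) K := by
  obtain ⟨hl, h1, h2⟩ := sub_iff_nat.mp h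
  rw [sub_iff_nat]
  unfold mapSDI
  simp only
  have hc : K.lev + (J.lev - I.lev) - K.lev = J.lev - I.lev := by omega
  rw [hc]
  have h2d : 0 < 2 ^ (J.lev - I.lev) := by positivity
  have e1 : (I.idx + 1) * 2 ^ (J.lev - I.lev) = I.idx * 2 ^ (J.lev - I.lev) + 2 ^ (J.lev - I.lev) := by ring
  have e2 : (K.idx + 1) * 2 ^ (J.lev - I.lev) = K.idx * 2 ^ (J.lev - I.lev) + 2 ^ (J.lev - I.lev) := by ring
  exact ⟨by omega, by omega, by omega⟩

lemma mapSDI_mem {I K J : SDI} (h : Sub J I) {x : ℝ} (hx : Mem x J) :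
    Mem (can I K x) (mapSDI I K J h) := by
  rw [can_mapSDI h]
  exact can_mem _ hx

/-- halves -/
def lhalf (I : SDI) : SDI := ⟨I.lev + 1, 2 * I.idx, by have := I.hidx; rw [pow_succ]; omega⟩
def rhalf (I : SDI) : SDI := ⟨I.lev + 1, 2 * I.idx + 1, by have := I.hidx; rw [pow_succ]; omega⟩

lemma lhalf_left (I : SDI) : (lhalf I).left = I.left := by
  unfold lhalf left
  simp only
  push_cast
  rw [pow_succ]
  field_simp

lemma lhalf_right (I : SDI) : (lhalf I).right = (rhalf I).left := by
  unfold lhalf rhalf left right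
  simp only
  push_cast
  ring

lemma rhalf_right (I : SDI) : (rhalf I).right = I.right := by
  unfold rhalf right
  simp only
  push_cast
  rw [pow_succ]
  field_simp
  ring

lemma lhalf_sub (I : SDI) : Sub (lhalf I) I := by
  constructor
  · rw [lhalf_left]
  · rw [lhalf_right]
    have := (rhalf I).left_lt_right
    rw [rhalf_right] at this
    exact this.le

lemma rhalf_sub (I : SDI) : Sub (rhalf I) I := by
  constructor
  · rw [← lhalf_right, ← lhalf_left]
    have := (lhalf I).left_lt_right
    exact this.le
  · rw [rhalf_right]

lemma halves_disj (I : SDI) : Disj (lhalf I) (rhalf I) := Or.inl (lhalf_right I).le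

lemma mem_lhalf_or_rhalf {x : ℝ} {I : SDI} (h : Mem x I) :
    Mem x (lhalf I) ∨ Mem x (rhalf I) := by
  rcases lt_or_ge x (rhalf I).left with hx | hx
  · left
    exact ⟨by rw [lhalf_left]; exact h.1, by rw [lhalf_right]; exact hx⟩
  · right
    exact ⟨hx, by rw [rhalf_right]; exact h.2⟩

/-- the uniform partition pieces. -/
def unif (N : ℕ) (j : Fin (2 ^ N)) : SDI := ⟨N, j, j.isLt⟩

lemma unif_disj {N : ℕ} {j j' : Fin (2 ^ N)} (h : j ≠ j') : Disj (unif N j) (unif N j') := by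
  unfold Disj unif right left
  simp only
  have : (j : ℕ) + 1 ≤ (j' : ℕ) ∨ (j' : ℕ) + 1 ≤ (j : ℕ) := by
    have := Fin.val_ne_of_ne h
    omega
  rcases this with h' | h'
  · left
    rw [div_le_div_iff₀ (by positivity) (by positivity)]
    have : ((j:ℝ) + 1) ≤ (j' : ℝ) := by exact_mod_cast h'
    nlinarith [pow_pos (by norm_num : (0:ℝ) < 2) N]
  · right
    rw [div_le_div_iff₀ (by positivity) (by positivity)]
    have : ((j':ℝ) + 1) ≤ (j : ℝ) := by exact_mod_cast h'
    nlinarith [pow_pos (by norm_num : (0:ℝ) < 2) N]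

lemma mem_unif_exists (N : ℕ) (x : ℝ) (h0 : 0 ≤ x) (h1 : x < 1) :
    ∃ j : Fin (2 ^ N), Mem x (unif N j) := by
  have hpos : (0:ℝ) < 2 ^ N := by positivity
  set y := x * 2 ^ N with hy
  have hy0 : 0 ≤ y := by positivity
  have hylt : y < 2 ^ N := by
    rw [hy]
    nlinarith
  refine ⟨⟨⌊y⌋₊, ?_⟩, ?_, ?_⟩
  · have := Nat.floor_le hy0
    have h2 : (⌊y⌋₊ : ℝ) < 2 ^ N := lt_of_le_of_lt this hylt
    exact_mod_cast h2
  · unfold unif left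
    simp only
    rw [div_le_iff₀ (by positivity)]
    exact Nat.floor_le hy0
  · unfold unif right
    simp only
    rw [lt_div_iff₀ (by positivity)]
    exact Nat.lt_floor_add_one y

/-- an SDI of level `≥ N` is contained in some uniform piece of level `N`. -/
lemma sub_unif_exists (I : SDI) (N : ℕ) (h : N ≤ I.lev) :
    ∃ j : Fin (2 ^ N), Sub I (unif N j) := by
  have h2d : 0 < 2 ^ (I.lev - N) := by positivity
  have hbound : I.idx / 2 ^ (I.lev - N) < 2 ^ N := by
    apply Nat.div_lt_of_lt_mul
    calc I.idx < 2 ^ I.lev := I.hidx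
      _ = 2 ^ (I.lev - N) * 2 ^ N := by rw [← pow_add]; congr 1; omega
  refine ⟨⟨I.idx / 2 ^ (I.lev - N), hbound⟩, ?_⟩
  rw [sub_iff_nat]
  unfold unif
  simp only
  refine ⟨h, Nat.div_mul_le_self _ _, nat_lt_div_succ_mul I.idx _ h2d⟩


lemma eq_mk {I J : SDI} (h1 : I.lev = J.lev) (h2 : I.idx = J.idx) : I = J := by
  cases I; cases J; simp_all

/-- the dyadic segment `[1 - 2^{-s}, 1)`. -/
def Dseg (s : ℕ) : SDI := ⟨s, 2 ^ s - 1, Nat.sub_lt (by positivity) one_pos⟩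

lemma Dseg_right (s : ℕ) : (Dseg s).right = 1 := by
  unfold Dseg right
  simp only
  have h1 : 0 < 2 ^ s := by positivity
  have : ((2 ^ s - 1 : ℕ) : ℝ) = 2 ^ s - 1 := by
    push_cast [Nat.cast_sub h1]
    norm_num
  rw [this]
  have : (0:ℝ) < 2 ^ s := by positivity
  field_simp
  ring

lemma sub_Dseg_zero (I : SDI) : Sub I (Dseg 0) := by
  constructor
  · have : (Dseg 0).left = 0 := by unfold Dseg left; norm_num
    rw [this]; exact I.left_nonneg
  · rw [Dseg_right]; exact I.right_le_one

lemma rhalf_Dseg (s : ℕ) : rhalf (Dseg s) = Dseg (s + 1) := by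
  apply eq_mk
  · rfl
  · unfold rhalf Dseg
    simp only
    have h1 : 0 < 2 ^ s := by positivity
    rw [pow_succ]
    omega

/-- comb partition of `Dseg s` into `r+1` pieces. -/
def comb (s r : ℕ) (t : Fin (r + 1)) : SDI :=
  if h : (t : ℕ) < r then
    ⟨s + t + 1, 2 ^ (s + t + 1) - 2,
      by have : 2 ≤ 2 ^ (s + (t:ℕ) + 1) := by
           calc 2 = 2 ^ 1 := rfl
             _ ≤ 2 ^ (s + (t:ℕ) + 1) := Nat.pow_le_pow_right (by norm_num) (by omega)
         omega⟩
  else Dseg (s + r)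

lemma comb_zero (s r : ℕ) (h : 0 < r) : comb s r ⟨0, by omega⟩ = lhalf (Dseg s) := by
  unfold comb
  rw [dif_pos (by simpa using h)]
  apply eq_mk
  · rfl
  · unfold lhalf Dseg
    simp only
    have h1 : 0 < 2 ^ s := by positivity
    rw [pow_succ]
    omega

lemma comb_last (s : ℕ) (t : Fin 1) : comb s 0 t = Dseg s := by
  unfold comb
  rw [dif_neg (by omega)]
  norm_num

lemma comb_succ (s r : ℕ) (t : Fin (r + 1)) : comb s (r + 1) t.succ = comb (s + 1) r t := by
  unfold comb
  by_cases h : (t : ℕ) < r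
  · rw [dif_pos (by simpa using h), dif_pos h]
    apply eq_mk
    · simp only [Fin.val_succ]; omega
    · simp only [Fin.val_succ]
      have he : s + ((t:ℕ) + 1) + 1 = s + 1 + (t:ℕ) + 1 := by omega
      rw [he]
  · rw [dif_neg (by simpa using h), dif_neg h]
    congr 1
    omega

lemma comb_sub (r : ℕ) : ∀ (s : ℕ) (t : Fin (r + 1)), Sub (comb s r t) (Dseg s) := by
  induction r with
  | zero => intro s t; rw [comb_last]; exact Sub.rfl _
  | succ r ih =>
    intro s t
    induction t using Fin.cases with
    | zero =>
      have : (0 : Fin (r + 2)) = ⟨0, by omega⟩ := rfl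
      rw [this, comb_zero s (r+1) (by omega)]
      exact lhalf_sub _
    | succ t' =>
      rw [comb_succ]
      exact Sub.trans (ih (s+1) t') (by rw [← rhalf_Dseg]; exact rhalf_sub _)

lemma comb_disj (r : ℕ) : ∀ (s : ℕ) (t t' : Fin (r + 1)), t ≠ t' →
    Disj (comb s r t) (comb s r t') := by
  induction r with
  | zero =>
    intro s t t' h
    exact absurd (Fin.ext (by omega)) h
  | succ r ih =>
    intro s t t' h
    have hz : (0 : Fin (r + 2)) = ⟨0, by omega⟩ := rfl
    induction t using Fin.cases with
    | zero =>
      induction t' using Fin.cases with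
      | zero => exact absurd rfl h
      | succ u =>
        rw [hz, comb_zero s (r+1) (by omega), comb_succ]
        exact (halves_disj (Dseg s)).mono (Sub.rfl _)
          (by rw [rhalf_Dseg]; exact comb_sub r (s+1) u)
    | succ u =>
      induction t' using Fin.cases with
      | zero =>
        rw [hz, comb_zero s (r+1) (by omega), comb_succ]
        exact ((halves_disj (Dseg s)).mono (Sub.rfl _)
          (by rw [rhalf_Dseg]; exact comb_sub r (s+1) u)).symm
      | succ u' =>
        rw [comb_succ, comb_succ]
        exact ih (s+1) u u' (fun hc => h (by rw [hc]))

lemma comb_cover (r : ℕ) : ∀ (s : ℕ) (x : ℝ), Mem x (Dseg s) →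
    ∃ t : Fin (r + 1), Mem x (comb s r t) := by
  induction r with
  | zero => intro s x hx; exact ⟨0, by rw [comb_last]; exact hx⟩
  | succ r ih =>
    intro s x hx
    rcases mem_lhalf_or_rhalf hx with h | h
    · refine ⟨⟨0, by omega⟩, ?_⟩
      rw [comb_zero s (r+1) (by omega)]
      exact h
    · rw [rhalf_Dseg] at h
      obtain ⟨t, ht⟩ := ih (s+1) x h
      exact ⟨t.succ, by rw [comb_succ]; exact ht⟩


lemma mapSDI_lev_eq {I K J : SDI} (h : Sub J I) :
    (mapSDI I K J h).lev = K.lev + (J.lev - I.lev) := rfl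

lemma sub_or_disj_of_lev {P J : SDI} (h : J.lev ≤ P.lev) : Sub P J ∨ Disj P J := by
  rcases trichotomy P J with h1 | h1 | h1
  · exact Or.inl h1
  · left
    rw [eq_of_sub_of_lev h1 h]
    exact Sub.rfl _
  · exact Or.inr h1

lemma exists_mem_of_not_disj {I J : SDI} (h : ¬ Disj I J) : ∃ x, Mem x I ∧ Mem x J := by
  unfold Disj at h
  push_neg at h
  refine ⟨max I.left J.left, ⟨le_max_left _ _, ?_⟩, ⟨le_max_right _ _, ?_⟩⟩
  · rcases max_cases I.left J.left with ⟨he, _⟩ | ⟨he, _⟩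
    · rw [he]; exact I.left_lt_right
    · rw [he]; exact h.1
  · rcases max_cases I.left J.left with ⟨he, _⟩ | ⟨he, _⟩
    · rw [he]; exact h.2
    · rw [he]; exact J.left_lt_right

lemma can_mapSDI_inv {I K J : SDI} (h : Sub J I) (x : ℝ) :
    can (mapSDI I K J h) J x = can K I x := by
  have e : can J (mapSDI I K J h) (can K I x) = x := by
    rw [← can_mapSDI h, can_inv]
  conv_lhs => rw [← e]
  rw [can_inv]

lemma mapSDI_disj {I K J1 J2 : SDI} (h1 : Sub J1 I) (h2 : Sub J2 I) (hd : Disj J1 J2) :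
    Disj (mapSDI I K J1 h1) (mapSDI I K J2 h2) := by
  by_contra hc
  obtain ⟨x, hx1, hx2⟩ := exists_mem_of_not_disj hc
  have hw1 : Mem (can K I x) J1 := by
    rw [← can_mapSDI_inv h1]
    exact can_mem _ hx1
  have hw2 : Mem (can K I x) J2 := by
    rw [← can_mapSDI_inv h2]
    exact can_mem _ hx2
  exact not_mem_of_disj hd hw1 hw2

end SDI

open SDI

/-- the interchange map of two disjoint standard dyadic intervals. -/
noncomputable def swapFun (J K : SDI) (x : ℝ) : ℝ :=
  open Classical in
  if Mem x J then can J K x else if Mem x K then can K J x else x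

lemma swapFun_left {J K : SDI} {x : ℝ} (h : Mem x J) : swapFun J K x = can J K x := by
  unfold swapFun
  rw [if_pos h]

lemma swapFun_right {J K : SDI} {x : ℝ} (hd : Disj J K) (h : Mem x K) :
    swapFun J K x = can K J x := by
  unfold swapFun
  rw [if_neg (fun h' => not_mem_of_disj hd h' h), if_pos h]

lemma swapFun_id {J K : SDI} {x : ℝ} (h1 : ¬ Mem x J) (h2 : ¬ Mem x K) :
    swapFun J K x = x := by
  unfold swapFun
  rw [if_neg h1, if_neg h2]

lemma swapFun_invol {J K : SDI} (hd : Disj J K) : Function.Involutive (swapFun J K) := by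
  intro x
  by_cases h1 : Mem x J
  · rw [swapFun_left h1]
    have hk : Mem (can J K x) K := can_mem _ h1
    rw [swapFun_right hd hk, can_inv]
  · by_cases h2 : Mem x K
    · rw [swapFun_right hd h2]
      have hj : Mem (can K J x) J := can_mem _ h2
      rw [swapFun_left hj, can_inv]
    · rw [swapFun_id h1 h2, swapFun_id h1 h2]

lemma swapFun_mem_Ico {J K : SDI} {x : ℝ} (h0 : 0 ≤ x) (h1 : x < 1) :
    0 ≤ swapFun J K x ∧ swapFun J K x < 1 := by
  by_cases hj : Mem x J
  · rw [swapFun_left hj]; exact mem_Ico (can_mem _ hj)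
  · by_cases hk : Mem x K
    · unfold swapFun
      rw [if_neg hj, if_pos hk]
      exact mem_Ico (can_mem _ hk)
    · rw [swapFun_id hj hk]; exact ⟨h0, h1⟩

/-- the interchange of two disjoint standard dyadic intervals, as a permutation of `[0,1)`. -/
noncomputable def swapPerm (J K : SDI) (hd : Disj J K) : Equiv.Perm UnitIco :=
  Function.Involutive.toPerm
    (fun x => ⟨swapFun J K x, Set.mem_Ico.mpr (swapFun_mem_Ico x.2.1 x.2.2)⟩)
    (fun x => Subtype.ext (swapFun_invol hd x))

lemma swapPerm_coe {J K : SDI} (hd : Disj J K) (x : UnitIco) :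
    ((swapPerm J K hd x : UnitIco) : ℝ) = swapFun J K (x : ℝ) := rfl

lemma swapPerm_mul_self {J K : SDI} (hd : Disj J K) :
    swapPerm J K hd * swapPerm J K hd = 1 := by
  apply Equiv.ext
  intro x
  apply Subtype.ext
  simpa [Equiv.Perm.mul_apply, swapPerm_coe] using swapFun_invol hd (x : ℝ)

lemma swapPerm_comm {J K : SDI} (hd : Disj J K) :
    swapPerm J K hd = swapPerm K J hd.symm := by
  apply Equiv.ext
  intro x
  apply Subtype.ext
  rw [swapPerm_coe, swapPerm_coe]
  by_cases hj : Mem (x:ℝ) J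
  · rw [swapFun_left hj, swapFun_right hd.symm hj]
  · by_cases hk : Mem (x:ℝ) K
    · rw [swapFun_right hd hk, swapFun_left hk]
    · rw [swapFun_id hj hk, swapFun_id hk hj]

/-- a uniform representation for an element of Thompson's V. -/
def GoodRep (f : Equiv.Perm UnitIco) (N : ℕ) : Prop :=
  ∀ j : Fin (2 ^ N), ∃ K : SDI,
    ∀ t : UnitIco, Mem (t : ℝ) (unif N j) → ((f t : ℝ)) = can (unif N j) K (t : ℝ)

lemma mem_unif_total (t : UnitIco) (N : ℕ) : ∃ j : Fin (2 ^ N), Mem (t : ℝ) (unif N j) :=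
  mem_unif_exists N _ t.2.1 t.2.2

lemma unif_lev (N : ℕ) (j : Fin (2 ^ N)) : (unif N j).lev = N := rfl

lemma goodRep_swapPerm {J K : SDI} (hd : Disj J K) :
    GoodRep (swapPerm J K hd) (max J.lev K.lev) := by
  intro j
  set P := unif (max J.lev K.lev) j with hP
  have hPlev : P.lev = max J.lev K.lev := rfl
  have hPJ : Sub P J ∨ Disj P J :=
    sub_or_disj_of_lev (by rw [hPlev]; exact le_max_left _ _)
  have hPK : Sub P K ∨ Disj P K :=
    sub_or_disj_of_lev (by rw [hPlev]; exact le_max_right _ _)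
  rcases hPJ with hsub | hdisjJ
  · refine ⟨mapSDI J K P hsub, ?_⟩
    intro t ht
    rw [swapPerm_coe, swapFun_left (mem_of_sub ht hsub), can_mapSDI hsub]
  · rcases hPK with hsub | hdisjK
    · refine ⟨mapSDI K J P hsub, ?_⟩
      intro t ht
      rw [swapPerm_coe, swapFun_right hd (mem_of_sub ht hsub), can_mapSDI hsub]
    · refine ⟨P, ?_⟩
      intro t ht
      rw [swapPerm_coe,
        swapFun_id (not_mem_of_disj hdisjJ ht) (not_mem_of_disj hdisjK ht), can_self]

/-- inverse images under a piece of a good representation. -/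
lemma piece_inv {f : Equiv.Perm UnitIco} {I K : SDI}
    (hK : ∀ t : UnitIco, Mem (t : ℝ) I → ((f t : ℝ)) = can I K (t : ℝ))
    (y : UnitIco) (hy : Mem (y : ℝ) K) :
    ((f⁻¹ y : UnitIco) : ℝ) = can K I (y : ℝ) := by
  have hmem : Mem (can K I (y : ℝ)) I := can_mem _ hy
  have hico := mem_Ico hmem
  set x : UnitIco := ⟨can K I (y : ℝ), Set.mem_Ico.mpr hico⟩ with hx
  have : f x = y := by
    apply Subtype.ext
    rw [hK x hmem]
    simp only [hx]
    rw [can_inv]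
  have : x = f⁻¹ y := by
    rw [← this]
    simp
  rw [← this]

lemma goodRep_mono {f : Equiv.Perm UnitIco} {N N' : ℕ} (h : N ≤ N') (hf : GoodRep f N) :
    GoodRep f N' := by
  intro j'
  obtain ⟨j, hsub⟩ := sub_unif_exists (unif N' j') N h
  obtain ⟨K, hK⟩ := hf j
  refine ⟨mapSDI (unif N j) K (unif N' j') hsub, ?_⟩
  intro t ht
  rw [hK t (mem_of_sub ht hsub), can_mapSDI hsub]

lemma goodRep_one : GoodRep 1 0 := by
  intro j
  refine ⟨unif 0 j, ?_⟩
  intro t _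
  rw [can_self]
  rfl

lemma goodRep_mul {f g : Equiv.Perm UnitIco} {Nf Ng : ℕ} (hf : GoodRep f Nf)
    (hg : GoodRep g Ng) : GoodRep (f * g) (Ng + Nf) := by
  intro j
  set P := unif (Ng + Nf) j with hP
  obtain ⟨j₁, hsub₁⟩ := sub_unif_exists P Ng (by rw [unif_lev]; omega)
  obtain ⟨K₁, hK₁⟩ := hg j₁
  set J' := mapSDI (unif Ng j₁) K₁ P hsub₁ with hJ'
  have hJlev : Nf ≤ J'.lev := by
    rw [hJ', mapSDI_lev_eq, unif_lev, unif_lev]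
    omega
  obtain ⟨j₂, hsub₂⟩ := sub_unif_exists J' Nf hJlev
  obtain ⟨K₂, hK₂⟩ := hf j₂
  refine ⟨mapSDI (unif Nf j₂) K₂ J' hsub₂, ?_⟩
  intro t ht
  have hg_eq : ((g t : ℝ)) = can P J' (t : ℝ) := by
    rw [hK₁ t (mem_of_sub ht hsub₁), can_mapSDI hsub₁]
  have hgJ' : Mem ((g t : ℝ)) J' := by
    rw [hg_eq]; exact can_mem _ ht
  have : ((f (g t) : ℝ)) = can J' (mapSDI (unif Nf j₂) K₂ J' hsub₂) ((g t : ℝ)) := by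
    rw [hK₂ (g t) (mem_of_sub hgJ' hsub₂), can_mapSDI hsub₂]
  rw [Equiv.Perm.mul_apply, this, hg_eq, can_comp]

lemma goodRep_inv {f : Equiv.Perm UnitIco} {N : ℕ} (hf : GoodRep f N) :
    ∃ M : ℕ, GoodRep f⁻¹ M := by
  choose K hK using hf
  set M := Finset.univ.sup (fun j : Fin (2 ^ N) => (K j).lev) with hM
  refine ⟨M, ?_⟩
  intro j'
  set Q := unif M j' with hQ
  -- the left endpoint of Q is hit by some piece
  have hQl : 0 ≤ Q.left ∧ Q.left < 1 := ⟨Q.left_nonneg, Q.left_lt_one⟩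
  set y : UnitIco := ⟨Q.left, Set.mem_Ico.mpr hQl⟩ with hy
  obtain ⟨j, hj⟩ := mem_unif_total (f⁻¹ y) N
  have hyK : Mem (y : ℝ) (K j) := by
    have := hK j (f⁻¹ y) hj
    rw [← Equiv.Perm.mul_apply, mul_inv_cancel, Equiv.Perm.one_apply] at this
    rw [this]
    exact can_mem _ hj
  have hnd : ¬ Disj Q (K j) := not_disj_of_mem Q.left_mem hyK
  have hlev : (K j).lev ≤ Q.lev := by
    rw [hQ, unif_lev]
    exact Finset.le_sup (f := fun j : Fin (2 ^ N) => (K j).lev) (Finset.mem_univ j)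
  have hsub : Sub Q (K j) := sub_of_not_disj hlev hnd
  refine ⟨mapSDI (K j) (unif N j) Q hsub, ?_⟩
  intro t ht
  rw [piece_inv (hK j) t (mem_of_sub ht hsub), can_mapSDI hsub]

/-! ### dyadic arithmetic -/

lemma isDyadic_nat_div (a N : ℕ) : IsDyadic ((a : ℝ) / 2 ^ N) :=
  ⟨a, N, by push_cast; ring⟩

lemma sdi_left_dyadic (I : SDI) : IsDyadic I.left := isDyadic_nat_div I.idx I.lev

lemma isDyadic_zpow_mul {a : ℝ} (m : ℤ) (h : IsDyadic a) : IsDyadic ((2:ℝ) ^ m * a) := by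
  obtain ⟨z, n, rfl⟩ := h
  rcases le_or_gt 0 m with hm | hm
  · refine ⟨z * 2 ^ m.toNat, n, ?_⟩
    rw [show (2:ℝ) ^ m = 2 ^ m.toNat by rw [← zpow_natCast]; congr 1; omega]
    push_cast; ring
  · refine ⟨z, n + (-m).toNat, ?_⟩
    rw [show (2:ℝ) ^ m = ((2:ℝ) ^ (-m).toNat)⁻¹ by
      rw [← zpow_natCast, ← zpow_neg]; congr 1; omega]
    rw [inv_mul_eq_div, div_div, ← pow_add]

lemma isDyadic_sub {a b : ℝ} (ha : IsDyadic a) (hb : IsDyadic b) : IsDyadic (a - b) := by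
  obtain ⟨z1, n1, rfl⟩ := ha
  obtain ⟨z2, n2, rfl⟩ := hb
  refine ⟨z1 * 2 ^ n2 - z2 * 2 ^ n1, n1 + n2, ?_⟩
  rw [pow_add]
  push_cast
  field_simp

/-! ### `IsThompsonV` from a good representation -/

lemma thompson_of_goodRep {f : Equiv.Perm UnitIco} {N : ℕ} (hf : GoodRep f N) :
    IsThompsonV f := by
  choose K hK using hf
  refine ⟨2 ^ N, fun k => (k : ℕ) / 2 ^ N,
    fun k => (N : ℤ) - (K k).lev,
    fun k => (K k).left - 2 ^ ((N : ℤ) - (K k).lev) * ((k : ℕ) / 2 ^ N),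
    by simp, by simp, ?_, fun k => isDyadic_nat_div _ _,
    fun k => isDyadic_sub (sdi_left_dyadic _)
      (isDyadic_zpow_mul _ (isDyadic_nat_div _ _)), ?_⟩
  · intro a b hab
    have h2 : (0:ℝ) < 2 ^ N := by positivity
    apply div_lt_div_of_pos_right ?_ h2
    exact_mod_cast hab
  · intro k t ht1 ht2
    have hmem : Mem (t : ℝ) (unif N k) := by
      constructor
      · simpa [unif, left] using ht1
      · unfold unif right
        simp only
        have : ((k : ℕ) : ℝ) + 1 = (((k : ℕ) + 1 : ℕ) : ℝ) := by push_cast; ring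
        rw [this]
        simpa [Fin.val_succ] using ht2
    rw [hK k t hmem]
    unfold can unif left
    simp only
    ring

/-! ### refinement: a good representation from `IsThompsonV` -/

lemma findPiece {n : ℕ} {x : Fin (n+1) → ℝ} (h0 : x 0 = 0) (h1 : x (Fin.last n) = 1)
    {p : ℝ} (hp0 : 0 ≤ p) (hp1 : p < 1) :
    ∃ k : Fin n, x k.castSucc ≤ p ∧ p < x k.succ := by
  classical
  set S : Finset (Fin (n+1)) := Finset.univ.filter (fun k => x k ≤ p) with hS
  have hne : S.Nonempty := ⟨0, by simp [hS, h0, hp0]⟩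
  set j0 := S.max' hne with hj0
  have hj0S : j0 ∈ S := S.max'_mem hne
  have hj0le : x j0 ≤ p := by
    have := hj0S
    rw [hS] at this
    simpa using this
  have hj0ne : j0 ≠ Fin.last n := by
    intro h
    rw [h, h1] at hj0le
    linarith
  have hlt : (j0 : ℕ) < n := by
    have h2 := j0.isLt
    have : (j0 : ℕ) ≠ n := fun hc => hj0ne (by ext; simpa using hc)
    omega
  refine ⟨⟨(j0 : ℕ), hlt⟩, ?_, ?_⟩
  · have he : (⟨(j0 : ℕ), hlt⟩ : Fin n).castSucc = j0 := by ext; simp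
    rw [he]
    exact hj0le
  · by_contra hc
    push_neg at hc
    have hmem : (⟨(j0 : ℕ), hlt⟩ : Fin n).succ ∈ S := by
      rw [hS]
      simp only [Finset.mem_filter, Finset.mem_univ, true_and]
      exact hc
    have hle := S.le_max' _ hmem
    rw [← hj0] at hle
    have : ((⟨(j0 : ℕ), hlt⟩ : Fin n).succ : ℕ) ≤ (j0 : ℕ) := hle
    simp [Fin.val_succ] at this

lemma goodRep_of_thompson {f : Equiv.Perm UnitIco} (hf : IsThompsonV f) :
    ∃ N, GoodRep f N := by
  classical
  obtain ⟨n, x, m, c, h0, h1, hmono, hxd, hcd, hpiece⟩ := hf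
  choose zx ax hx using hxd
  choose wc bc hc using hcd
  set A := Finset.univ.sup ax with hA
  set B := Finset.univ.sup (fun k => bc k + (m k).toNat) with hB
  set N := A + B with hN
  have hNa : ∀ k, ax k ≤ N := fun k => by
    have := Finset.le_sup (f := ax) (Finset.mem_univ k); omega
  have hNb : ∀ k, bc k + (m k).toNat ≤ N := fun k => by
    have h99 := Finset.le_sup (f := fun k => bc k + (m k).toNat) (Finset.mem_univ k)
    omega
  set X : Fin (n+1) → ℤ := fun k => zx k * 2 ^ (N - ax k) with hXdef
  have hX : ∀ k, x k = (X k : ℝ) / 2 ^ N := by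
    intro k
    rw [hx k, hXdef]
    have hsplit : (2:ℝ) ^ N = 2 ^ ax k * 2 ^ (N - ax k) := by
      rw [← pow_add]; congr 1; have := hNa k; omega
    push_cast
    rw [hsplit]
    have p1 : ((2:ℝ)) ^ ax k ≠ 0 := by positivity
    have p2 : ((2:ℝ)) ^ (N - ax k) ≠ 0 := by positivity
    field_simp
  have h2N : (0:ℝ) < 2 ^ N := by positivity
  refine ⟨N, ?_⟩
  intro j
  set p : ℝ := (j : ℕ) / 2 ^ N with hp
  have hp0 : 0 ≤ p := by positivity
  have hp1 : p < 1 := by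
    rw [hp, div_lt_one h2N]
    exact_mod_cast j.isLt
  obtain ⟨k, hpc, hps⟩ := findPiece h0 h1 hp0 hp1
  have hm2 : (0:ℝ) < 2 ^ (m k) := by positivity
  -- (j+1)/2^N ≤ x k.succ
  have hnext : p + 1 / 2 ^ N ≤ x k.succ := by
    rw [hX] at hps ⊢
    rw [hp] at hps ⊢
    have hjX : (j : ℤ) < X k.succ := by
      have := (div_lt_div_iff₀ h2N h2N).mp hps
      have h2 : ((j:ℕ) : ℝ) < (X k.succ : ℝ) := by nlinarith
      exact_mod_cast h2
    have : ((j:ℕ) : ℝ) + 1 ≤ (X k.succ : ℝ) := by exact_mod_cast hjX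
    rw [← add_div, div_le_div_iff₀ h2N h2N]
    nlinarith
  have hxks1 : x k.succ ≤ 1 := by
    rw [← h1]
    exact hmono.monotone (Fin.le_last _)
  have hxkc0 : 0 ≤ x k.castSucc := by
    rw [← h0]
    exact hmono.monotone (Fin.zero_le _)
  have hcs : x k.castSucc < x k.succ := hmono (Fin.castSucc_lt_succ (i := k))
  -- value at left endpoint of the piece
  set tkc : UnitIco := ⟨x k.castSucc, Set.mem_Ico.mpr ⟨hxkc0, lt_of_lt_of_le hcs hxks1⟩⟩
    with htkc
  have falpha : ((f tkc : ℝ)) = 2 ^ (m k) * x k.castSucc + c k :=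
    hpiece k tkc le_rfl hcs
  have halpha0 : 0 ≤ 2 ^ (m k) * x k.castSucc + c k := by
    rw [← falpha]; exact (f tkc).2.1
  have halpha1 : 2 ^ (m k) * x k.castSucc + c k < 1 := by
    rw [← falpha]; exact (f tkc).2.2
  -- the image of the piece stays within [0,1]
  have hbeta : 2 ^ (m k) * x k.succ + c k ≤ 1 := by
    by_contra hb
    push_neg at hb
    set t0 : ℝ := (1 - c k) / 2 ^ (m k) with ht0
    have ht0l : x k.castSucc < t0 := by
      rw [ht0, lt_div_iff₀ hm2]
      nlinarith
    have ht0r : t0 < x k.succ := by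
      rw [ht0, div_lt_iff₀ hm2]
      nlinarith
    set tt : UnitIco := ⟨t0, Set.mem_Ico.mpr ⟨le_trans hxkc0 ht0l.le,
      lt_of_lt_of_le ht0r hxks1⟩⟩ with htt
    have hfv := hpiece k tt ht0l.le ht0r
    have hval : ((f tt : ℝ)) = 1 := by
      rw [hfv]
      have hco : ((tt : UnitIco) : ℝ) = t0 := rfl
      rw [hco, ht0]
      field_simp
      ring
    have := (f tt).2.2
    rw [hval] at this
    exact lt_irrefl _ this
  -- m k ≤ N
  have hXlt : X k.castSucc + 1 ≤ X k.succ := by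
    have := hmono (Fin.castSucc_lt_succ (i := k))
    rw [hX, hX, div_lt_div_iff₀ h2N h2N] at this
    have h2 : (X k.castSucc : ℝ) < (X k.succ : ℝ) := by nlinarith
    have := (Int.lt_iff_add_one_le).mp (by exact_mod_cast h2)
    exact this
  have hgap : (1:ℝ) / 2 ^ N ≤ x k.succ - x k.castSucc := by
    have hc1 : ((X k.castSucc : ℝ) + 1) ≤ (X k.succ : ℝ) := by exact_mod_cast hXlt
    rw [hX, hX, div_sub_div_same]
    exact (div_le_div_iff_of_pos_right h2N).mpr (by linarith)
  have hmN : m k ≤ (N : ℤ) := by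
    have key : (2:ℝ) ^ (m k) * (1 / 2 ^ N) ≤ 1 := by
      calc (2:ℝ) ^ (m k) * (1 / 2 ^ N) ≤ 2 ^ (m k) * (x k.succ - x k.castSucc) := by
            apply mul_le_mul_of_nonneg_left hgap hm2.le
        _ ≤ 1 := by nlinarith
    have h2 : (2:ℝ) ^ (m k) * 2 ^ (-(N:ℤ)) ≤ 1 := by
      rw [zpow_neg, zpow_natCast]
      calc (2:ℝ) ^ (m k) * ((2:ℝ) ^ N)⁻¹ = 2 ^ (m k) * (1 / 2 ^ N) := by ring
        _ ≤ 1 := key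
    rw [← zpow_add₀ (two_ne_zero : (2:ℝ) ≠ 0)] at h2
    have h3 : (2:ℝ) ^ (m k + -(N:ℤ)) ≤ 2 ^ (0:ℤ) := by simpa using h2
    have := (zpow_le_zpow_iff_right₀ (by norm_num : (1:ℝ) < 2)).mp h3
    omega
  -- construct the image interval
  set d : ℕ := ((N : ℤ) - m k).toNat with hdd
  have hd : (d : ℤ) = (N : ℤ) - m k := Int.toNat_of_nonneg (by omega)
  set g : ℕ := ((N : ℤ) - m k - bc k).toNat with hgg
  have hg : (g : ℤ) = (N : ℤ) - m k - bc k := by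
    apply Int.toNat_of_nonneg
    have h9 := hNb k
    omega
  set idxZ : ℤ := (j : ℕ) + wc k * 2 ^ g with hidxZ
  -- real identity: 2^m p + c = idxZ / 2^d
  have hzd : ((2:ℝ)) ^ d = (2:ℝ) ^ ((d:ℕ) : ℤ) := by rw [zpow_natCast]
  have h2d : (0:ℝ) < 2 ^ d := by positivity
  have key : (2:ℝ) ^ (m k) * p + c k = (idxZ : ℝ) / 2 ^ d := by
    rw [eq_div_iff (ne_of_gt h2d)]
    rw [hp, hc k, hidxZ]
    have e1 : (2:ℝ) ^ (m k) * (2:ℝ) ^ d = 2 ^ N := by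
      rw [hzd, ← zpow_add₀ (two_ne_zero : (2:ℝ) ≠ 0), ← zpow_natCast (2:ℝ) N]
      congr 1
      omega
    have e2 : ((2:ℝ)) ^ d / (2:ℝ) ^ bc k = 2 ^ g := by
      rw [hzd, ← zpow_natCast (2:ℝ) (bc k), ← zpow_sub₀ (two_ne_zero : (2:ℝ) ≠ 0),
        ← zpow_natCast (2:ℝ) g]
      congr 1
      omega
    push_cast
    calc (2 ^ m k * ((j:ℕ) / 2 ^ N) + (wc k : ℝ) / 2 ^ bc k) * 2 ^ d
        = ((j:ℕ):ℝ) * ((2 ^ m k * 2 ^ d) / 2 ^ N) + (wc k : ℝ) * (2 ^ d / 2 ^ bc k) := by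
          ring
      _ = ((j:ℕ):ℝ) + (wc k : ℝ) * 2 ^ g := by
          rw [e1, e2, div_self (ne_of_gt h2N)]
          ring
  have halphaj : 0 ≤ 2 ^ (m k) * p + c k := by
    set pt : UnitIco := ⟨p, Set.mem_Ico.mpr ⟨hp0, hp1⟩⟩ with hpt
    have hv := hpiece k pt hpc hps
    have := (f pt).2.1
    rw [hv] at this
    exact this
  have hidx0 : (0:ℤ) ≤ idxZ := by
    have h6 : (0:ℝ) ≤ (idxZ : ℝ) / 2 ^ d := by rw [← key]; exact halphaj
    have h7 := (le_div_iff₀ h2d).mp h6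
    rw [zero_mul] at h7
    exact_mod_cast h7
  have hbj : ((idxZ : ℝ) + 1) / 2 ^ d ≤ 1 := by
    have e3 : (1:ℝ) / 2 ^ d = 2 ^ (m k) * (1 / 2 ^ N) := by
      rw [hzd]
      rw [show (1:ℝ) / 2 ^ ((d:ℕ):ℤ) = 2 ^ (-((d:ℕ):ℤ)) by rw [zpow_neg]; field_simp]
      rw [show (1:ℝ) / 2 ^ N = 2 ^ (-(N:ℤ)) by rw [zpow_neg, zpow_natCast]; field_simp]
      rw [← zpow_add₀ (two_ne_zero : (2:ℝ) ≠ 0)]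
      congr 1
      omega
    have e4 : ((idxZ : ℝ) + 1) / 2 ^ d = 2 ^ (m k) * (p + 1 / 2 ^ N) + c k := by
      rw [add_div, ← key, e3]
      ring
    rw [e4]
    calc 2 ^ (m k) * (p + 1 / 2 ^ N) + c k ≤ 2 ^ (m k) * x k.succ + c k := by
          have := mul_le_mul_of_nonneg_left hnext hm2.le
          linarith
      _ ≤ 1 := hbeta
  have hidxlt : idxZ.toNat < 2 ^ d := by
    have h4 : (idxZ : ℝ) + 1 ≤ 2 ^ d := by rwa [div_le_one h2d] at hbj
    have h5 : idxZ + 1 ≤ 2 ^ d := by exact_mod_cast h4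
    have hpow : ((2:ℤ)) ^ d = ((2 ^ d : ℕ) : ℤ) := by push_cast; ring
    omega
  refine ⟨⟨d, idxZ.toNat, hidxlt⟩, ?_⟩
  intro t ht
  have hul : (unif N j).left = p := rfl
  have hur : (unif N j).right = p + 1 / 2 ^ N := by
    unfold unif right
    simp only
    rw [hp, ← add_div]
  have htl : x k.castSucc ≤ (t:ℝ) := le_trans hpc (by rw [← hul]; exact ht.1)
  have htr : (t:ℝ) < x k.succ := by
    have h8 := ht.2
    rw [hur] at h8
    linarith
  rw [hpiece k t htl htr]
  have e5 : ((idxZ.toNat : ℕ) : ℝ) = (idxZ : ℝ) := by exact_mod_cast Int.toNat_of_nonneg hidx0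
  unfold can
  rw [hul]
  have e6 : (((unif N j).lev : ℤ) - (((⟨d, idxZ.toNat, hidxlt⟩ : SDI).lev) : ℤ)) = m k := by
    show (N:ℤ) - (d:ℤ) = m k
    omega
  rw [e6]
  have e7 : (⟨d, idxZ.toNat, hidxlt⟩ : SDI).left = (idxZ:ℝ) / 2 ^ d := by
    show ((idxZ.toNat : ℕ):ℝ) / 2 ^ d = _
    rw [e5]
  rw [e7]
  linear_combination key

/-! ### the two stabilizer subsets and the closure subgroup -/

def Gset2 (i : ℕ) : Set (Equiv.Perm UnitIco) :=
  {f | IsThompsonV f ∧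
    ∀ t : UnitIco, 1 / 2 ^ (i + 1) ≤ (t : ℝ) → (t : ℝ) < 1 / 2 ^ i → f t = t}

def Hgrp (i : ℕ) : Subgroup (Equiv.Perm UnitIco) :=
  Subgroup.closure (GThompson i ∪ Gset2 i)

def Aseg (i : ℕ) : SDI := ⟨i + 1, 0, by positivity⟩

def Bseg (i : ℕ) : SDI := ⟨i + 1, 1, by
  have : (2:ℕ) ^ 1 ≤ 2 ^ (i+1) := Nat.pow_le_pow_right (by norm_num) (by omega)
  omega⟩

lemma Aseg_left (i : ℕ) : (Aseg i).left = 0 := by unfold Aseg left; norm_num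

lemma Aseg_right (i : ℕ) : (Aseg i).right = 1 / 2 ^ (i + 1) := by
  unfold Aseg right; norm_num

lemma Bseg_left (i : ℕ) : (Bseg i).left = 1 / 2 ^ (i + 1) := by
  unfold Bseg left; norm_num

lemma Bseg_right (i : ℕ) : (Bseg i).right = 1 / 2 ^ i := by
  unfold Bseg right
  simp only
  rw [pow_succ]
  norm_num
  rw [mul_comm, ← div_div]
  norm_num

lemma AB_disj (i : ℕ) : Disj (Aseg i) (Bseg i) :=
  Or.inl (by rw [Aseg_right, Bseg_left])

lemma mem_Aseg_iff (i : ℕ) (t : UnitIco) :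
    Mem (t : ℝ) (Aseg i) ↔ (t : ℝ) < 1 / 2 ^ (i + 1) := by
  constructor
  · intro h; rw [← Aseg_right i]; exact h.2
  · intro h
    exact ⟨by rw [Aseg_left]; exact t.2.1, by rw [Aseg_right]; exact h⟩

lemma mem_Bseg_iff (i : ℕ) (t : UnitIco) :
    Mem (t : ℝ) (Bseg i) ↔ 1 / 2 ^ (i + 1) ≤ (t : ℝ) ∧ (t : ℝ) < 1 / 2 ^ i := by
  rw [show (1:ℝ) / 2 ^ (i+1) = (Bseg i).left from (Bseg_left i).symm,
    show (1:ℝ) / 2 ^ i = (Bseg i).right from (Bseg_right i).symm]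
  exact Iff.rfl

lemma swapPerm_mem_G1 (i : ℕ) {J K : SDI} (hd : Disj J K) (hJ : Disj J (Aseg i))
    (hK : Disj K (Aseg i)) : swapPerm J K hd ∈ Hgrp i := by
  apply Subgroup.subset_closure
  left
  refine ⟨thompson_of_goodRep (goodRep_swapPerm hd), ?_⟩
  intro t ht
  have hmem : Mem (t : ℝ) (Aseg i) := (mem_Aseg_iff i t).mpr ht
  apply Subtype.ext
  rw [swapPerm_coe]
  exact swapFun_id (not_mem_of_disj hJ.symm hmem) (not_mem_of_disj hK.symm hmem)

lemma swapPerm_mem_G2 (i : ℕ) {J K : SDI} (hd : Disj J K) (hJ : Disj J (Bseg i))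
    (hK : Disj K (Bseg i)) : swapPerm J K hd ∈ Hgrp i := by
  apply Subgroup.subset_closure
  right
  refine ⟨thompson_of_goodRep (goodRep_swapPerm hd), ?_⟩
  intro t ht1 ht2
  have hmem : Mem (t : ℝ) (Bseg i) := (mem_Bseg_iff i t).mpr ⟨ht1, ht2⟩
  apply Subtype.ext
  rw [swapPerm_coe]
  exact swapFun_id (not_mem_of_disj hJ.symm hmem) (not_mem_of_disj hK.symm hmem)

/-! ### classification of an SDI with respect to `A`, `B` -/

lemma sub_A_of_idx_zero {i : ℕ} {J : SDI} (h0 : J.idx = 0) (hl : J.lev ≤ i + 1) :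
    Sub (Aseg i) J := by
  rw [sub_iff_nat]
  unfold Aseg
  simp only
  have hpos : 0 < (J.idx + 1) * 2 ^ (i + 1 - J.lev) := by positivity
  exact ⟨hl, by simp [h0], by omega⟩

lemma sub_B_of_idx_zero {i : ℕ} {J : SDI} (h0 : J.idx = 0) (hl : J.lev ≤ i) :
    Sub (Bseg i) J := by
  rw [sub_iff_nat]
  unfold Bseg
  simp only
  have h2 : 2 ≤ 2 ^ (i + 1 - J.lev) := by
    calc 2 = 2 ^ 1 := rfl
      _ ≤ 2 ^ (i + 1 - J.lev) := Nat.pow_le_pow_right (by norm_num) (by omega)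
  refine ⟨by omega, by simp [h0], ?_⟩
  rw [h0]
  omega

lemma classify (i : ℕ) (J : SDI) :
    (Disj J (Aseg i) ∧ Disj J (Bseg i)) ∨ Sub J (Aseg i) ∨ Sub J (Bseg i) ∨
      (Sub (Aseg i) J ∧ Sub (Bseg i) J ∧ J.idx = 0 ∧ J.lev ≤ i) := by
  rcases trichotomy J (Aseg i) with hJA | hAJ | hdA
  · exact Or.inr (Or.inl hJA)
  · -- A ⊆ J
    obtain ⟨hl, hi1, hi2⟩ := sub_iff_nat.mp hAJ
    simp only [Aseg] at hl hi1 hi2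
    have hJ0 : J.idx = 0 := by
      have hp : 0 < 2 ^ (i + 1 - J.lev) := by positivity
      by_contra hne
      have h1 : 1 ≤ J.idx := by omega
      nlinarith [hi1]
    rcases Nat.lt_or_ge J.lev (i+1) with hlt | hge
    · right; right; right
      exact ⟨sub_A_of_idx_zero hJ0 (by omega), sub_B_of_idx_zero hJ0 (by omega), hJ0, by omega⟩
    · -- J.lev = i+1, so J = A
      have : J = Aseg i := by
        apply eq_mk
        · show J.lev = i + 1
          omega
        · show J.idx = 0
          exact hJ0
      right; left
      rw [this]
      exact Sub.rfl _
  · rcases trichotomy J (Bseg i) with hJB | hBJ | hdB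
    · exact Or.inr (Or.inr (Or.inl hJB))
    · -- B ⊆ J but J disjoint from A : impossible unless J = B
      obtain ⟨hl, hi1, hi2⟩ := sub_iff_nat.mp hBJ
      simp only [Bseg] at hl hi1 hi2
      rcases Nat.lt_or_ge J.lev (i+1) with hlt | hge
      · -- J.idx * 2^(i+1-J.lev) ≤ 1 with the power ≥ 2 forces J.idx = 0
        have h2 : 2 ≤ 2 ^ (i + 1 - J.lev) := by
          calc 2 = 2 ^ 1 := rfl
            _ ≤ 2 ^ (i + 1 - J.lev) := Nat.pow_le_pow_right (by norm_num) (by omega)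
        have hJ0 : J.idx = 0 := by
          by_contra hne
          have h1 : 1 ≤ J.idx := by omega
          nlinarith [hi1]
        -- then A ⊆ J, contradicting disjointness
        have hsub := sub_A_of_idx_zero (i := i) hJ0 (by omega)
        exact absurd ((Aseg i).left_mem)
          (not_mem_of_disj hdA (mem_of_sub (Aseg i).left_mem hsub))
      · have : J = Bseg i := by
          apply eq_mk
          · show J.lev = i + 1
            omega
          · show J.idx = 1
            have h2 : i + 1 - J.lev = 0 := by omega
            rw [h2] at hi1 hi2
            omega
        right; right; left
        rw [this]
        exact Sub.rfl _
    · exact Or.inl ⟨hdA, hdB⟩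

/-! ### factorization of swaps -/

lemma swapPerm_halves {J K : SDI} (hd : Disj J K)
    (d1 : Disj (lhalf J) (mapSDI J K (lhalf J) (lhalf_sub J)))
    (d2 : Disj (rhalf J) (mapSDI J K (rhalf J) (rhalf_sub J))) :
    swapPerm J K hd = swapPerm _ _ d1 * swapPerm _ _ d2 := by
  set K1 := mapSDI J K (lhalf J) (lhalf_sub J) with hK1
  set K2 := mapSDI J K (rhalf J) (rhalf_sub J) with hK2
  have hK1K2 : Disj K1 K2 := mapSDI_disj _ _ (halves_disj J)
  apply Equiv.ext
  intro x
  apply Subtype.ext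
  rw [Equiv.Perm.mul_apply, swapPerm_coe, swapPerm_coe, swapPerm_coe]
  by_cases hxJ : Mem (x:ℝ) J
  · rcases mem_lhalf_or_rhalf hxJ with h | h
    · have hnr : ¬ Mem (x:ℝ) (rhalf J) := not_mem_of_disj (halves_disj J) h
      have hnK2 : ¬ Mem (x:ℝ) K2 := fun hc =>
        not_mem_of_disj hd hxJ (mem_of_sub hc (mapSDI_sub _))
      rw [swapFun_id hnr hnK2, swapFun_left h, swapFun_left hxJ,
        can_mapSDI (lhalf_sub J)]
    · rw [swapFun_left h]
      have hy : Mem (can (rhalf J) K2 (x:ℝ)) K2 := can_mem _ h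
      have hnl : ¬ Mem (can (rhalf J) K2 (x:ℝ)) (lhalf J) := fun hc =>
        not_mem_of_disj hd (mem_of_sub hc (lhalf_sub J)) (mem_of_sub hy (mapSDI_sub _))
      have hnK1 : ¬ Mem (can (rhalf J) K2 (x:ℝ)) K1 := fun hc =>
        not_mem_of_disj hK1K2 hc hy
      rw [swapFun_id hnl hnK1, swapFun_left hxJ, can_mapSDI (rhalf_sub J)]
  · by_cases hxK : Mem (x:ℝ) K
    · have hw : Mem (can K J (x:ℝ)) J := can_mem _ hxK
      have hxinv : can J K (can K J (x:ℝ)) = (x:ℝ) := can_inv _ _ _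
      rcases mem_lhalf_or_rhalf hw with h | h
      · have hx1 : Mem (x:ℝ) K1 := by
          rw [← hxinv, can_mapSDI (lhalf_sub J)]
          exact can_mem _ h
        have hnr : ¬ Mem (x:ℝ) (rhalf J) := fun hc =>
          not_mem_of_disj hd (mem_of_sub hc (rhalf_sub J)) hxK
        have hnK2 : ¬ Mem (x:ℝ) K2 := fun hc => not_mem_of_disj hK1K2 hx1 hc
        rw [swapFun_id hnr hnK2, swapFun_right d1 hx1, swapFun_right hd hxK]
        exact (can_mapSDI_inv (lhalf_sub J) (x:ℝ)).symm
      · have hx2 : Mem (x:ℝ) K2 := by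
          rw [← hxinv, can_mapSDI (rhalf_sub J)]
          exact can_mem _ h
        rw [swapFun_right d2 hx2]
        have hu : Mem (can K2 (rhalf J) (x:ℝ)) (rhalf J) := can_mem _ hx2
        have hul : ¬ Mem (can K2 (rhalf J) (x:ℝ)) (lhalf J) :=
          not_mem_of_disj (halves_disj J).symm hu
        have hunK1 : ¬ Mem (can K2 (rhalf J) (x:ℝ)) K1 := fun hc =>
          not_mem_of_disj hd (mem_of_sub hu (rhalf_sub J)) (mem_of_sub hc (mapSDI_sub _))
        rw [swapFun_id hul hunK1, swapFun_right hd hxK]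
        exact (can_mapSDI_inv (rhalf_sub J) (x:ℝ)).symm
    · have hnl : ¬ Mem (x:ℝ) (lhalf J) := fun hc => hxJ (mem_of_sub hc (lhalf_sub J))
      have hnr : ¬ Mem (x:ℝ) (rhalf J) := fun hc => hxJ (mem_of_sub hc (rhalf_sub J))
      have hnK1 : ¬ Mem (x:ℝ) K1 := fun hc => hxK (mem_of_sub hc (mapSDI_sub _))
      have hnK2 : ¬ Mem (x:ℝ) K2 := fun hc => hxK (mem_of_sub hc (mapSDI_sub _))
      rw [swapFun_id hnr hnK2, swapFun_id hnl hnK1, swapFun_id hxJ hxK]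

lemma swap_conj {J K M : SDI} (hJK : Disj J K) (hJM : Disj J M) (hKM : Disj K M) :
    swapPerm J K hJK = swapPerm K M hKM * swapPerm J M hJM * swapPerm K M hKM := by
  apply Equiv.ext
  intro x
  apply Subtype.ext
  rw [Equiv.Perm.mul_apply, Equiv.Perm.mul_apply, swapPerm_coe, swapPerm_coe,
    swapPerm_coe, swapPerm_coe]
  by_cases hxJ : Mem (x:ℝ) J
  · rw [swapFun_left hxJ,
      swapFun_id (not_mem_of_disj hJK hxJ) (not_mem_of_disj hJM hxJ),
      swapFun_left hxJ,
      swapFun_right hKM (can_mem _ hxJ), can_comp]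
  · by_cases hxK : Mem (x:ℝ) K
    · rw [swapFun_right hJK hxK,
        swapFun_left hxK,
        swapFun_right hJM (can_mem M hxK), can_comp,
        swapFun_id (not_mem_of_disj hJK (can_mem J hxK))
          (not_mem_of_disj hJM (can_mem J hxK))]
    · by_cases hxM : Mem (x:ℝ) M
      · rw [swapFun_id hxJ hxK,
          swapFun_right hKM hxM,
          swapFun_id (not_mem_of_disj hJK.symm (can_mem K hxM))
            (not_mem_of_disj hKM (can_mem K hxM)),
          swapFun_left (can_mem K hxM), can_inv]
      · rw [swapFun_id hxJ hxK, swapFun_id hxK hxM, swapFun_id hxJ hxM,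
          swapFun_id hxK hxM]

/-! ### the helper interval `M` inside `[1/2^i, 1)` -/

def Mseg (i : ℕ) (hi : 1 ≤ i) : SDI :=
  ⟨i + 1, 2, by
    calc 2 < 2 ^ 2 := by norm_num
      _ ≤ 2 ^ (i + 1) := Nat.pow_le_pow_right (by norm_num) (by omega)⟩

lemma Mseg_left (i : ℕ) (hi : 1 ≤ i) : (Mseg i hi).left = 2 / 2 ^ (i + 1) := by
  unfold Mseg left
  norm_num

lemma Aseg_disj_Mseg (i : ℕ) (hi : 1 ≤ i) : Disj (Aseg i) (Mseg i hi) := by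
  left
  rw [Aseg_right, Mseg_left]
  apply (div_le_div_iff_of_pos_right (by positivity : (0:ℝ) < 2 ^ (i+1))).mpr
  norm_num

lemma Bseg_disj_Mseg (i : ℕ) (hi : 1 ≤ i) : Disj (Bseg i) (Mseg i hi) := by
  left
  rw [Bseg_right, Mseg_left]
  apply le_of_eq
  rw [pow_succ]
  field_simp

lemma mem_H_alpha_beta {i : ℕ} (hi : 1 ≤ i) {J K : SDI} (hd : Disj J K)
    (hJA : Sub J (Aseg i)) (hKB : Sub K (Bseg i)) : swapPerm J K hd ∈ Hgrp i := by
  have hJM : Disj J (Mseg i hi) := (Aseg_disj_Mseg i hi).mono hJA (Sub.rfl _)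
  have hKM : Disj K (Mseg i hi) := (Bseg_disj_Mseg i hi).mono hKB (Sub.rfl _)
  rw [swap_conj hd hJM hKM]
  have hKA : Disj K (Aseg i) := (AB_disj i).symm.mono hKB (Sub.rfl _)
  have hJB : Disj J (Bseg i) := (AB_disj i).mono hJA (Sub.rfl _)
  exact mul_mem (mul_mem
    (swapPerm_mem_G1 i hKM hKA (Aseg_disj_Mseg i hi).symm)
    (swapPerm_mem_G2 i hJM hJB (Bseg_disj_Mseg i hi).symm))
    (swapPerm_mem_G1 i hKM hKA (Aseg_disj_Mseg i hi).symm)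

lemma rhalf_left_of_idx_zero {J : SDI} (h : J.idx = 0) :
    (rhalf J).left = 1 / 2 ^ (J.lev + 1) := by
  unfold rhalf left
  simp only [h]
  norm_num

/-! ### swaps with `J = [0, 2^{-j0})` -/

lemma mem_H_omega {i : ℕ} (hi : 1 ≤ i) : ∀ (d : ℕ) (J K : SDI) (hd : Disj J K),
    J.idx = 0 → J.lev + d = i → swapPerm J K hd ∈ Hgrp i := by
  intro d
  induction d with
  | zero =>
    intro J K hd hJ0 hJlev
    have hlA : lhalf J = Aseg i := by
      apply eq_mk
      · show J.lev + 1 = i + 1; omega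
      · show 2 * J.idx = 0; omega
    have hrB : rhalf J = Bseg i := by
      apply eq_mk
      · show J.lev + 1 = i + 1; omega
      · show 2 * J.idx + 1 = 1; omega
    have hKA : Disj K (Aseg i) :=
      hd.symm.mono (Sub.rfl _) (sub_A_of_idx_zero hJ0 (by omega))
    have hKB : Disj K (Bseg i) :=
      hd.symm.mono (Sub.rfl _) (sub_B_of_idx_zero hJ0 (by omega))
    rw [swapPerm_halves hd (hd.mono (lhalf_sub J) (mapSDI_sub _))
      (hd.mono (rhalf_sub J) (mapSDI_sub _))]
    apply mul_mem
    · apply swapPerm_mem_G2 i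
      · rw [hlA]; exact AB_disj i
      · exact hKB.mono (mapSDI_sub _) (Sub.rfl _)
    · apply swapPerm_mem_G1 i
      · rw [hrB]; exact (AB_disj i).symm
      · exact hKA.mono (mapSDI_sub _) (Sub.rfl _)
  | succ d ih =>
    intro J K hd hJ0 hJlev
    have hKA : Disj K (Aseg i) :=
      hd.symm.mono (Sub.rfl _) (sub_A_of_idx_zero hJ0 (by omega))
    have hKB : Disj K (Bseg i) :=
      hd.symm.mono (Sub.rfl _) (sub_B_of_idx_zero hJ0 (by omega))
    have hrA : Disj (rhalf J) (Aseg i) := by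
      right
      rw [Aseg_right, rhalf_left_of_idx_zero hJ0]
      apply one_div_le_one_div_of_le (by positivity)
      apply pow_le_pow_right₀ (by norm_num)
      omega
    have hrB : Disj (rhalf J) (Bseg i) := by
      right
      rw [Bseg_right, rhalf_left_of_idx_zero hJ0]
      apply one_div_le_one_div_of_le (by positivity)
      apply pow_le_pow_right₀ (by norm_num)
      omega
    rw [swapPerm_halves hd (hd.mono (lhalf_sub J) (mapSDI_sub _))
      (hd.mono (rhalf_sub J) (mapSDI_sub _))]
    apply mul_mem
    · apply ih (lhalf J) _ _ (by show 2 * J.idx = 0; omega) (by show J.lev + 1 + d = i; omega)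
    · apply swapPerm_mem_G1 i
      · exact hrA
      · exact hKA.mono (mapSDI_sub _) (Sub.rfl _)

/-! ### every swap lies in the subgroup -/

theorem swapPerm_mem_H {i : ℕ} (hi : 1 ≤ i) {J K : SDI} (hd : Disj J K) :
    swapPerm J K hd ∈ Hgrp i := by
  rcases classify i J with ⟨hJa, hJb⟩ | hJA | hJB | ⟨hAJ, hBJ, hJ0, hJlev⟩
  · rcases classify i K with ⟨hKa, hKb⟩ | hKA | hKB | ⟨hAK, hBK, hK0, hKlev⟩
    · exact swapPerm_mem_G1 i hd hJa hKa
    · exact swapPerm_mem_G2 i hd hJb ((AB_disj i).mono hKA (Sub.rfl _))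
    · exact swapPerm_mem_G1 i hd hJa ((AB_disj i).symm.mono hKB (Sub.rfl _))
    · rw [swapPerm_comm]
      exact mem_H_omega hi (i - K.lev) K J hd.symm hK0 (by omega)
  · rcases classify i K with ⟨hKa, hKb⟩ | hKA | hKB | ⟨hAK, hBK, hK0, hKlev⟩
    · exact swapPerm_mem_G2 i hd ((AB_disj i).mono hJA (Sub.rfl _)) hKb
    · exact swapPerm_mem_G2 i hd ((AB_disj i).mono hJA (Sub.rfl _))
        ((AB_disj i).mono hKA (Sub.rfl _))
    · exact mem_H_alpha_beta hi hd hJA hKB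
    · exact absurd J.left_mem (not_mem_of_disj hd.symm
        (mem_of_sub (mem_of_sub J.left_mem hJA) hAK))
  · rcases classify i K with ⟨hKa, hKb⟩ | hKA | hKB | ⟨hAK, hBK, hK0, hKlev⟩
    · exact swapPerm_mem_G1 i hd ((AB_disj i).symm.mono hJB (Sub.rfl _)) hKa
    · rw [swapPerm_comm]
      exact mem_H_alpha_beta hi hd.symm hKA hJB
    · exact swapPerm_mem_G1 i hd ((AB_disj i).symm.mono hJB (Sub.rfl _))
        ((AB_disj i).symm.mono hKB (Sub.rfl _))
    · exact absurd J.left_mem (not_mem_of_disj hd.symm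
        (mem_of_sub (mem_of_sub J.left_mem hJB) hBK))
  · exact mem_H_omega hi (i - J.lev) J K hd hJ0 (by omega)

/-! ### auxiliary facts for the partition-to-comb lemma -/

lemma sub_rhalf_of_disj_lhalf {X D : SDI} (h1 : Sub X D) (h2 : Disj X (lhalf D)) :
    Sub X (rhalf D) := by
  constructor
  · have hm : Mem X.left D := mem_of_sub X.left_mem h1
    rcases mem_lhalf_or_rhalf hm with h | h
    · exact absurd h (not_mem_of_disj h2 X.left_mem)
    · exact h.1
  · rw [rhalf_right]
    exact h1.2

lemma ne_exists {n : ℕ} (j₀ : Fin (n + 2)) : ∃ j : Fin (n+2), j ≠ j₀ := by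
  by_cases h : j₀ = 0
  · refine ⟨1, ?_⟩
    rw [h]
    exact one_ne_zero
  · exact ⟨0, fun hc => h hc.symm⟩

/-- The key induction: any standard partition of `Dseg s` can be carried onto the comb
by an element of the subgroup. -/
lemma lemC (i : ℕ) (hi : 1 ≤ i) : ∀ (r s : ℕ) (P : Fin (r+1) → SDI),
    (∀ j, Sub (P j) (Dseg s)) →
    (∀ j j', j ≠ j' → Disj (P j) (P j')) →
    (∀ x : UnitIco, Mem (x:ℝ) (Dseg s) → ∃ j, Mem (x:ℝ) (P j)) →
    ∃ w : Equiv.Perm UnitIco, w ∈ Hgrp i ∧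
      (∀ x : UnitIco, ¬ Mem (x:ℝ) (Dseg s) → w x = x) ∧
      (∀ j, ∃ u : Fin (r+1), ∀ x : UnitIco, Mem (x:ℝ) (P j) →
        ((w x : ℝ)) = can (P j) (comb s r u) (x:ℝ)) := by
  intro r
  induction r with
  | zero =>
    intro s P hsub hdisj hcover
    -- P 0 = Dseg s
    have hPD : P 0 = Dseg s := by
      have h1 : Sub (P 0) (Dseg s) := hsub 0
      -- left endpoints
      have hDl : Mem (Dseg s).left (Dseg s) := (Dseg s).left_mem
      have hIco := mem_Ico hDl
      obtain ⟨j, hj⟩ := hcover ⟨(Dseg s).left, Set.mem_Ico.mpr hIco⟩ hDl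
      have hj0 : j = 0 := Fin.ext (by omega)
      rw [hj0] at hj
      have hleft : (P 0).left = (Dseg s).left := le_antisymm hj.1 h1.1
      -- right endpoints
      have hright : (P 0).right = (Dseg s).right := by
        rcases lt_or_ge (P 0).right (Dseg s).right with hlt | hle
        · exfalso
          have hmem : Mem (P 0).right (Dseg s) := by
            constructor
            · calc (Dseg s).left ≤ (P 0).left := h1.1
                _ ≤ (P 0).right := (P 0).left_lt_right.le
            · exact hlt
          have hIco2 := mem_Ico hmem
          obtain ⟨j', hj'⟩ := hcover ⟨(P 0).right, Set.mem_Ico.mpr hIco2⟩ hmem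
          have hj'0 : j' = 0 := Fin.ext (by omega)
          rw [hj'0] at hj'
          exact absurd hj'.2 (by simp only [not_lt]; exact le_refl _)
        · exact le_antisymm h1.2 hle
      exact ext_of hleft hright
    refine ⟨1, one_mem _, fun x _ => rfl, fun j => ⟨0, fun x hx => ?_⟩⟩
    have hj0 : j = 0 := Fin.ext (by omega)
    rw [hj0, comb_last, ← hPD, can_self]
    rfl
  | succ r ih =>
    intro s P hsub hdisj hcover
    set D := Dseg s with hD
    have hDlev : D.lev = s := rfl
    set L := lhalf D with hL
    set R := rhalf D with hR
    have hdLR : Disj L R := halves_disj D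
    -- find the piece containing the left endpoint
    have hDl : Mem D.left D := D.left_mem
    obtain ⟨j₀, hj₀⟩ := hcover ⟨D.left, Set.mem_Ico.mpr (mem_Ico hDl)⟩ hDl
    have hPl : (P j₀).left = D.left := le_antisymm hj₀.1 (hsub j₀).1
    -- (P j₀) has level ≥ s+1
    have hlev : s + 1 ≤ (P j₀).lev := by
      rcases Nat.lt_or_ge (P j₀).lev (s+1) with hlt | hge
      · exfalso
        have hlevle : (P j₀).lev ≤ s := by omega
        have heq : P j₀ = D := eq_of_sub_of_lev (hsub j₀) hlevle
        obtain ⟨j₁, hj₁ne⟩ := ne_exists j₀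
        have hm : Mem (P j₁).left (P j₀) := by
          rw [heq]
          exact mem_of_sub (P j₁).left_mem (hsub j₁)
        exact not_mem_of_disj (hdisj j₁ j₀ hj₁ne) (P j₁).left_mem hm
      · exact hge
    have hPL : Sub (P j₀) L := by
      have h1 : ¬ Disj (P j₀) L := by
        intro hdj
        apply not_mem_of_disj hdj hj₀
        have hmL : Mem D.left L := by
          rw [show D.left = L.left from (lhalf_left D).symm]
          exact L.left_mem
        exact hmL
      exact (sub_or_disj_of_lev (by rw [hL]; exact hlev)).resolve_right h1
    have hdPR : Disj (P j₀) R := hdLR.mono hPL (Sub.rfl _)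
    -- the moving element g
    set σ := swapPerm L R hdLR with hσ
    set τ := swapPerm (P j₀) R hdPR with hτ
    set g := σ * τ with hg
    have hgH : g ∈ Hgrp i := mul_mem (swapPerm_mem_H hi _) (swapPerm_mem_H hi _)
    have hgOut : ∀ x : UnitIco, ¬ Mem (x:ℝ) D → g x = x := by
      intro x hx
      have hnP : ¬ Mem (x:ℝ) (P j₀) := fun hc => hx (mem_of_sub hc (hsub j₀))
      have hnR : ¬ Mem (x:ℝ) R := fun hc => hx (mem_of_sub hc (rhalf_sub D))
      have hnL : ¬ Mem (x:ℝ) L := fun hc => hx (mem_of_sub hc (lhalf_sub D))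
      apply Subtype.ext
      rw [hg, Equiv.Perm.mul_apply, swapPerm_coe]
      rw [show ((τ x : UnitIco) : ℝ) = (x:ℝ) from by rw [hτ, swapPerm_coe, swapFun_id hnP hnR]]
      exact swapFun_id hnL hnR
    -- images of the pieces
    have hstep : ∀ j, ∃ Q : SDI, (j = j₀ → Q = L) ∧ (j ≠ j₀ → Sub Q R) ∧
        ∀ x : UnitIco, Mem (x:ℝ) (P j) → ((g x : ℝ)) = can (P j) Q (x:ℝ) := by
      intro j
      by_cases hj : j = j₀
      · subst hj
        refine ⟨L, fun _ => rfl, fun h => absurd rfl h, fun x hx => ?_⟩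
        rw [hg, Equiv.Perm.mul_apply, swapPerm_coe]
        rw [show ((τ x : UnitIco) : ℝ) = can (P j) R (x:ℝ) from by
          rw [hτ, swapPerm_coe, swapFun_left hx]]
        have hmr : Mem (can (P j) R (x:ℝ)) R := can_mem _ hx
        rw [swapFun_right hdLR hmr, can_comp]
      · have hdj : Disj (P j) (P j₀) := hdisj j j₀ hj
        have hPjlev : s + 1 ≤ (P j).lev := by
          rcases Nat.lt_or_ge (P j).lev (s+1) with hlt | hge
          · exfalso
            have heq : P j = D := eq_of_sub_of_lev (hsub j) (by omega)
            apply not_mem_of_disj hdj.symm (P j₀).left_mem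
            rw [heq]
            exact mem_of_sub (P j₀).left_mem (hsub j₀)
          · exact hge
        rcases sub_or_disj_of_lev (show L.lev ≤ (P j).lev from hPjlev) with hsubL | hdisjL
        · -- P j ⊆ L, disjoint from P j₀ : τ fixes it, σ maps it into R
          refine ⟨mapSDI L R (P j) hsubL, fun h => absurd h hj, fun _ => mapSDI_sub _,
            fun x hx => ?_⟩
          have hnP : ¬ Mem (x:ℝ) (P j₀) := not_mem_of_disj hdj hx
          have hnR : ¬ Mem (x:ℝ) R := not_mem_of_disj (hdLR.mono hsubL (Sub.rfl _)) hx
          rw [hg, Equiv.Perm.mul_apply, swapPerm_coe]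
          rw [show ((τ x : UnitIco) : ℝ) = (x:ℝ) from by
            rw [hτ, swapPerm_coe, swapFun_id hnP hnR]]
          rw [swapFun_left (mem_of_sub hx hsubL), can_mapSDI hsubL]
        · -- P j ⊆ R
          have hsubR : Sub (P j) R := sub_rhalf_of_disj_lhalf (hsub j) hdisjL
          set Q1 := mapSDI R (P j₀) (P j) hsubR with hQ1
          have hQ1L : Sub Q1 L := Sub.trans (mapSDI_sub _) hPL
          refine ⟨mapSDI L R Q1 hQ1L, fun h => absurd h hj, fun _ => mapSDI_sub _,
            fun x hx => ?_⟩
          have hnP : ¬ Mem (x:ℝ) (P j₀) := not_mem_of_disj hdj hx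
          rw [hg, Equiv.Perm.mul_apply, swapPerm_coe]
          rw [show ((τ x : UnitIco) : ℝ) = can (P j) Q1 (x:ℝ) from by
            rw [hτ, swapPerm_coe, swapFun_right hdPR (mem_of_sub hx hsubR),
              can_mapSDI hsubR]]
          have hmq : Mem (can (P j) Q1 (x:ℝ)) Q1 := can_mem _ hx
          rw [swapFun_left (mem_of_sub hmq hQ1L), can_mapSDI hQ1L, can_comp]
    choose P2 hP2j₀ hP2R hP2map using hstep
    -- disjointness of the images
    have hP2disj : ∀ j j', j ≠ j' → Disj (P2 j) (P2 j') := by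
      intro j j' hne
      by_contra hc
      obtain ⟨y, hy1, hy2⟩ := exists_mem_of_not_disj hc
      have hyIco := mem_Ico hy1
      set yU : UnitIco := ⟨y, Set.mem_Ico.mpr hyIco⟩ with hyU
      have e1 : ((g⁻¹ yU : UnitIco) : ℝ) = can (P2 j) (P j) y := piece_inv (hP2map j) yU hy1
      have e2 : ((g⁻¹ yU : UnitIco) : ℝ) = can (P2 j') (P j') y := piece_inv (hP2map j') yU hy2
      have m1 : Mem ((g⁻¹ yU : UnitIco) : ℝ) (P j) := by rw [e1]; exact can_mem _ hy1
      have m2 : Mem ((g⁻¹ yU : UnitIco) : ℝ) (P j') := by rw [e2]; exact can_mem _ hy2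
      exact not_mem_of_disj (hdisj j j' hne) m1 m2
    -- the images cover R = Dseg (s+1)
    have hP2cover : ∀ x : UnitIco, Mem (x:ℝ) (Dseg (s+1)) → ∃ j, j ≠ j₀ ∧ Mem (x:ℝ) (P2 j) := by
      intro x hx
      have hxR : Mem (x:ℝ) R := by rw [hR, rhalf_Dseg]; exact hx
      have hxD : Mem (x:ℝ) D := mem_of_sub hxR (rhalf_sub D)
      have hgD : Mem ((g⁻¹ x : UnitIco) : ℝ) D := by
        by_contra hcon
        have h1 := hgOut (g⁻¹ x) hcon
        rw [← Equiv.Perm.mul_apply, mul_inv_cancel, Equiv.Perm.one_apply] at h1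
        have h2 : ((g⁻¹ x : UnitIco) : ℝ) = (x : ℝ) := by rw [← h1]
        exact hcon (by rw [h2]; exact hxD)
      obtain ⟨j, hj⟩ := hcover (g⁻¹ x) hgD
      have hgx : ((g (g⁻¹ x) : UnitIco) : ℝ) = can (P j) (P2 j) ((g⁻¹ x : UnitIco) : ℝ) :=
        hP2map j (g⁻¹ x) hj
      rw [← Equiv.Perm.mul_apply, mul_inv_cancel, Equiv.Perm.one_apply] at hgx
      have hmem : Mem (x:ℝ) (P2 j) := by rw [hgx]; exact can_mem _ hj
      refine ⟨j, ?_, hmem⟩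
      intro hjj
      rw [hjj, hP2j₀ j₀ rfl] at hmem
      exact not_mem_of_disj hdLR.symm hxR hmem
    -- apply the induction hypothesis on Dseg (s+1)
    set Q : Fin (r+1) → SDI := fun t => P2 (j₀.succAbove t) with hQdef
    have hQsub : ∀ t, Sub (Q t) (Dseg (s+1)) := by
      intro t
      rw [← rhalf_Dseg]
      exact hP2R _ (Fin.succAbove_ne j₀ t)
    have hQdisj : ∀ t t', t ≠ t' → Disj (Q t) (Q t') := by
      intro t t' hne
      exact hP2disj _ _ (fun hc => hne (Fin.succAbove_right_injective hc))
    have hQcover : ∀ x : UnitIco, Mem (x:ℝ) (Dseg (s+1)) → ∃ t, Mem (x:ℝ) (Q t) := by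
      intro x hx
      obtain ⟨j, hjne, hjm⟩ := hP2cover x hx
      obtain ⟨t, ht⟩ := Fin.exists_succAbove_eq hjne
      exact ⟨t, by rw [hQdef]; simp only; rw [ht]; exact hjm⟩
    obtain ⟨w', hw'H, hw'Out, hw'map⟩ := ih (s+1) Q hQsub hQdisj hQcover
    refine ⟨w' * g, mul_mem hw'H hgH, ?_, ?_⟩
    · intro x hx
      rw [Equiv.Perm.mul_apply, hgOut x hx]
      apply hw'Out
      intro hc
      exact hx (mem_of_sub (by rw [← rhalf_Dseg] at hc; exact hc) (rhalf_sub D))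
    · intro j
      by_cases hj : j = j₀
      · subst hj
        refine ⟨⟨0, by omega⟩, fun x hx => ?_⟩
        rw [comb_zero s (r+1) (by omega)]
        have hgx : ((g x : UnitIco) : ℝ) = can (P j) L (x:ℝ) := by
          rw [hP2map j x hx, hP2j₀ j rfl]
        have hmemL : Mem ((g x : UnitIco) : ℝ) L := by rw [hgx]; exact can_mem _ hx
        have hfix : w' (g x) = g x := by
          apply hw'Out
          intro hc
          rw [← rhalf_Dseg] at hc
          exact not_mem_of_disj hdLR hmemL hc
        rw [Equiv.Perm.mul_apply, hfix, hgx]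
      · obtain ⟨t, ht⟩ := Fin.exists_succAbove_eq hj
        obtain ⟨u', hu'⟩ := hw'map t
        refine ⟨u'.succ, fun x hx => ?_⟩
        rw [comb_succ]
        have hgx : ((g x : UnitIco) : ℝ) = can (P j) (Q t) (x:ℝ) := by
          rw [hP2map j x hx, hQdef]
          simp only
          rw [ht]
        have hmemQ : Mem ((g x : UnitIco) : ℝ) (Q t) := by rw [hgx]; exact can_mem _ hx
        rw [Equiv.Perm.mul_apply, hu' (g x) hmemQ, hgx, can_comp]

/-! ### realizing permutations of comb pieces -/

lemma mem_Dseg_zero (x : UnitIco) : Mem (x:ℝ) (Dseg 0) := by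
  constructor
  · rw [show (Dseg 0).left = 0 from by unfold Dseg left; norm_num]
    exact x.2.1
  · rw [Dseg_right]
    exact x.2.2

def Realizes (r : ℕ) (h : Equiv.Perm UnitIco) (σ : Equiv.Perm (Fin (r+1))) : Prop :=
  ∀ (t : Fin (r+1)) (x : UnitIco), Mem (x:ℝ) (comb 0 r t) →
    ((h x : ℝ)) = can (comb 0 r t) (comb 0 r (σ t)) (x:ℝ)

lemma realizes_unique {r : ℕ} {h h' : Equiv.Perm UnitIco} {σ : Equiv.Perm (Fin (r+1))}
    (h1 : Realizes r h σ) (h2 : Realizes r h' σ) : h = h' := by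
  apply Equiv.ext
  intro x
  obtain ⟨t, ht⟩ := comb_cover r 0 (x:ℝ) (mem_Dseg_zero x)
  apply Subtype.ext
  rw [h1 t x ht, h2 t x ht]

lemma realizes_one (r : ℕ) : Realizes r 1 1 := by
  intro t x ht
  show ((x : UnitIco) : ℝ) = can (comb 0 r t) (comb 0 r t) (x:ℝ)
  rw [can_self]

lemma realizes_mul {r : ℕ} {h h' : Equiv.Perm UnitIco} {σ σ' : Equiv.Perm (Fin (r+1))}
    (H : Realizes r h σ) (H' : Realizes r h' σ') : Realizes r (h * h') (σ * σ') := by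
  intro t x ht
  rw [Equiv.Perm.mul_apply, H (σ' t) (h' x) (by rw [H' t x ht]; exact can_mem _ ht),
    H' t x ht, can_comp]
  rfl

lemma realizes_swap {r : ℕ} {a b : Fin (r+1)} (hab : a ≠ b) :
    Realizes r (swapPerm (comb 0 r a) (comb 0 r b) (comb_disj r 0 a b hab))
      (Equiv.swap a b) := by
  intro t x ht
  rw [swapPerm_coe]
  by_cases hta : t = a
  · rw [hta] at ht ⊢
    rw [swapFun_left ht, Equiv.swap_apply_left]
  · by_cases htb : t = b
    · rw [htb] at ht ⊢
      rw [swapFun_right (comb_disj r 0 a b hab) ht, Equiv.swap_apply_right]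
    · rw [swapFun_id (not_mem_of_disj (comb_disj r 0 t a hta) ht)
        (not_mem_of_disj (comb_disj r 0 t b htb) ht),
        Equiv.swap_apply_of_ne_of_ne hta htb, can_self]

lemma lemD {i : ℕ} (hi : 1 ≤ i) (r : ℕ) (σ : Equiv.Perm (Fin (r+1))) :
    ∀ h : Equiv.Perm UnitIco, Realizes r h σ → h ∈ Hgrp i := by
  refine Equiv.Perm.swap_induction_on
    (motive := fun σ => ∀ h : Equiv.Perm UnitIco, Realizes r h σ → h ∈ Hgrp i) σ ?_ ?_
  · intro h hr
    rw [realizes_unique hr (realizes_one r)]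
    exact one_mem _
  · intro f a b hab ih h hr
    set s := swapPerm (comb 0 r a) (comb 0 r b) (comb_disj r 0 a b hab) with hs
    have h1 : Realizes r (s * h) (Equiv.swap a b * (Equiv.swap a b * f)) :=
      realizes_mul (realizes_swap hab) hr
    rw [← mul_assoc, Equiv.swap_mul_self, one_mul] at h1
    have h2 : s * h ∈ Hgrp i := ih (s * h) h1
    have h3 : s * (s * h) = h := by
      rw [← mul_assoc, swapPerm_mul_self, one_mul]
    rw [← h3]
    exact mul_mem (swapPerm_mem_H hi _) h2

/-! ### every element of Thompson's V lies in the subgroup -/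

theorem main_mem (i : ℕ) (hi : 1 ≤ i) {f : Equiv.Perm UnitIco} (hf : IsThompsonV f) :
    f ∈ Hgrp i := by
  classical
  obtain ⟨N, hrep⟩ := goodRep_of_thompson hf
  choose K hK using hrep
  set r := 2 ^ N - 1 with hrdef
  have hr : r + 1 = 2 ^ N := Nat.sub_add_cancel Nat.one_le_two_pow
  set e : Fin (r+1) ≃ Fin (2 ^ N) := finCongr hr with he
  set Pdom : Fin (r+1) → SDI := fun t => unif N (e t) with hPdom
  set Pimg : Fin (r+1) → SDI := fun t => K (e t) with hPimg
  -- hypotheses for lemC on the domain partition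
  have hdom_sub : ∀ t, Sub (Pdom t) (Dseg 0) := fun t => sub_Dseg_zero _
  have hdom_disj : ∀ t t', t ≠ t' → Disj (Pdom t) (Pdom t') := fun t t' hne =>
    unif_disj (fun hc => hne (e.injective hc))
  have hdom_cover : ∀ x : UnitIco, Mem (x:ℝ) (Dseg 0) → ∃ t, Mem (x:ℝ) (Pdom t) := by
    intro x _
    obtain ⟨j, hj⟩ := mem_unif_total x N
    refine ⟨e.symm j, ?_⟩
    rw [hPdom]
    simp only [Equiv.apply_symm_apply]
    exact hj
  -- hypotheses for lemC on the image partition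
  have himg_sub : ∀ t, Sub (Pimg t) (Dseg 0) := fun t => sub_Dseg_zero _
  have himg_disj : ∀ t t', t ≠ t' → Disj (Pimg t) (Pimg t') := by
    intro t t' hne
    by_contra hc
    obtain ⟨y, hy1, hy2⟩ := exists_mem_of_not_disj hc
    have hyIco := mem_Ico hy1
    set yU : UnitIco := ⟨y, Set.mem_Ico.mpr hyIco⟩ with hyU
    have e1 := piece_inv (hK (e t)) yU hy1
    have e2 := piece_inv (hK (e t')) yU hy2
    have m1 : Mem ((f⁻¹ yU : UnitIco) : ℝ) (unif N (e t)) := by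
      rw [e1]; exact can_mem _ hy1
    have m2 : Mem ((f⁻¹ yU : UnitIco) : ℝ) (unif N (e t')) := by
      rw [e2]; exact can_mem _ hy2
    exact not_mem_of_disj (unif_disj (fun hc2 => hne (e.injective hc2))) m1 m2
  have himg_cover : ∀ x : UnitIco, Mem (x:ℝ) (Dseg 0) → ∃ t, Mem (x:ℝ) (Pimg t) := by
    intro x _
    obtain ⟨j, hj⟩ := mem_unif_total (f⁻¹ x) N
    have e1 := hK j (f⁻¹ x) hj
    rw [← Equiv.Perm.mul_apply, mul_inv_cancel, Equiv.Perm.one_apply] at e1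
    refine ⟨e.symm j, ?_⟩
    rw [hPimg]
    simp only [Equiv.apply_symm_apply]
    rw [e1]
    exact can_mem _ hj
  obtain ⟨v, hvH, hvOut, hvmap⟩ := lemC i hi r 0 Pdom hdom_sub hdom_disj hdom_cover
  obtain ⟨w, hwH, hwOut, hwmap⟩ := lemC i hi r 0 Pimg himg_sub himg_disj himg_cover
  choose ρ hρ using hvmap
  choose π hπ using hwmap
  -- ρ and π are injective
  have hinj : ∀ (P' : Fin (r+1) → SDI) (u : Equiv.Perm UnitIco)
      (τ : Fin (r+1) → Fin (r+1)),
      (∀ t t', t ≠ t' → Disj (P' t) (P' t')) →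
      (∀ t, ∀ x : UnitIco, Mem (x:ℝ) (P' t) → ((u x : ℝ)) = can (P' t) (comb 0 r (τ t)) (x:ℝ)) →
      Function.Injective τ := by
    intro P' u τ hdisj' hmap t t' htt
    by_contra hne
    have hne' : t ≠ t' := hne
    set y : ℝ := (comb 0 r (τ t)).left with hy
    have hym : Mem y (comb 0 r (τ t)) := (comb 0 r (τ t)).left_mem
    have hym' : Mem y (comb 0 r (τ t')) := by rw [← htt]; exact hym
    have hyIco := mem_Ico hym
    set yU : UnitIco := ⟨y, Set.mem_Ico.mpr hyIco⟩ with hyU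
    have e1 := piece_inv (hmap t) yU hym
    have e2 := piece_inv (hmap t') yU hym'
    have m1 : Mem ((u⁻¹ yU : UnitIco) : ℝ) (P' t) := by rw [e1]; exact can_mem _ hym
    have m2 : Mem ((u⁻¹ yU : UnitIco) : ℝ) (P' t') := by rw [e2]; exact can_mem _ hym'
    exact not_mem_of_disj (hdisj' t t' hne') m1 m2
  have hρinj : Function.Injective ρ := hinj Pdom v ρ hdom_disj hρ
  have hπinj : Function.Injective π := hinj Pimg w π himg_disj hπ
  set σρ : Equiv.Perm (Fin (r+1)) :=
    Equiv.ofBijective ρ ((Finite.injective_iff_bijective).mp hρinj) with hσρ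
  set σπ : Equiv.Perm (Fin (r+1)) :=
    Equiv.ofBijective π ((Finite.injective_iff_bijective).mp hπinj) with hσπ
  set σ : Equiv.Perm (Fin (r+1)) := σρ.symm.trans σπ with hσ
  set h : Equiv.Perm UnitIco := w * (f * v⁻¹) with hh
  have hReal : Realizes r h σ := by
    intro t x hx
    set j := σρ.symm t with hj
    have hρj : ρ j = t := σρ.apply_symm_apply t
    have hx' : Mem (x:ℝ) (comb 0 r (ρ j)) := by rw [hρj]; exact hx
    have e1 := piece_inv (hρ j) x hx'
    have m1 : Mem ((v⁻¹ x : UnitIco) : ℝ) (Pdom j) := by rw [e1]; exact can_mem _ hx'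
    have e2 := hK (e j) (v⁻¹ x) m1
    have m2 : Mem ((f (v⁻¹ x) : UnitIco) : ℝ) (Pimg j) := by rw [e2]; exact can_mem _ m1
    have e3 := hπ j (f (v⁻¹ x)) m2
    have hcoe : ((h x : UnitIco) : ℝ) = ((w (f (v⁻¹ x)) : UnitIco) : ℝ) := by
      rw [hh]
      rfl
    rw [hcoe, e3, e2, e1]
    have hσt : σ t = π j := rfl
    rw [hσt, ← hρj]
    rw [can_comp, can_comp]
  have hmemh : h ∈ Hgrp i := lemD hi r σ h hReal
  have hfh : f = w⁻¹ * h * v := by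
    rw [hh]
    group
  rw [hfh]
  exact mul_mem (mul_mem (inv_mem hwH) hmemh) hvH

end TP

/-- Thompson's group `V` is generated by the pointwise stabilizer of
`[0, 1/2^(i+1))` together with the pointwise stabilizer of
`[1/2^(i+1), 1/2^i)`, for every `i ≥ 1`. -/
theorem stmt14 (i : ℕ) (hi : 1 ≤ i) :
    {f | IsThompsonV f} =
      ↑(Subgroup.closure (GThompson i ∪
        {f | IsThompsonV f ∧
          ∀ t : UnitIco, 1 / 2 ^ (i + 1) ≤ (t : ℝ) → (t : ℝ) < 1 / 2 ^ i → f t = t})) := by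
  ext f
  simp only [Set.mem_setOf_eq, SetLike.mem_coe]
  constructor
  · intro hf
    exact TP.main_mem i hi hf
  · intro hf
    have hgr : ∃ N, TP.GoodRep f N := by
      refine Subgroup.closure_induction (p := fun g _ => ∃ N, TP.GoodRep g N)
        ?_ ?_ ?_ ?_ hf
      · rintro g (⟨hT, _⟩ | ⟨hT, _⟩)
        · exact TP.goodRep_of_thompson hT
        · exact TP.goodRep_of_thompson hT
      · exact ⟨0, TP.goodRep_one⟩
      · rintro g1 g2 _ _ ⟨N1, h1⟩ ⟨N2, h2⟩
        exact ⟨N2 + N1, TP.goodRep_mul h1 h2⟩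
      · rintro g _ ⟨N, h⟩
        exact TP.goodRep_inv h
    obtain ⟨N, hN⟩ := hgr
    exact TP.thompson_of_goodRep hN
end
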